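/- arXiv:1906.07503 — 4 statements merged into one kernel-verified Lean document; each statement's English description precedes it below -/
import Mathlib

section
/- Let 𝒢 be a finite directed graph with a distinguished vertex * from which every vertex of 𝒢 is reachable by a directed path, and suppose there exist λ > 1 and C > 0 such that the number of directed paths of length n in 𝒢 starting at * is at most C λⁿ for all n ≥ 1. Call a strongly connected component of 𝒢 maximal if the spectral radius of its adjacency matrix equals λ. Then no directed path in 𝒢 begins at a vertex of one maximal component and ends at a vertex of a different maximal component. -/
open scoped Classical BigOperators ENNReal
open MeasureTheory

noncomputable section

namespace Paper

/-! ### Word metric and hyperbolicity -/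

variable {G : Type*} [Group G]

/-- The word length of `g` with respect to a generating set `S`. -/
def wordLength (S : Set G) (g : G) : ℕ :=
  sInf {n | ∃ l : List G, l.length = n ∧ (∀ x ∈ l, x ∈ S) ∧ l.prod = g}

/-- The word metric on `G` determined by `S`. -/
def wordDist (S : Set G) (g h : G) : ℕ :=
  wordLength S (g⁻¹ * h)

/-- A discrete geodesic segment of length `n` in the Cayley graph. -/
def IsGeodesicSeg (S : Set G) (γ : ℕ → G) (n : ℕ) : Prop :=
  ∀ i, i ≤ n → ∀ j, j ≤ n → (wordDist S (γ i) (γ j) : ℤ) = |(i : ℤ) - (j : ℤ)|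

/-- A discrete geodesic of length `n` from `a` to `b` in the Cayley graph. -/
def GeodesicFrom (S : Set G) (γ : ℕ → G) (n : ℕ) (a b : G) : Prop :=
  IsGeodesicSeg S γ n ∧ γ 0 = a ∧ γ n = b ∧ n = wordDist S a b

/-- The side `γ` is contained in the `δ`-neighbourhood of the union of `γ₁` and `γ₂`. -/
def SideThin (S : Set G) (δ : ℝ) (γ : ℕ → G) (n : ℕ) (γ₁ : ℕ → G) (n₁ : ℕ)
    (γ₂ : ℕ → G) (n₂ : ℕ) : Prop :=
  ∀ i, i ≤ n →
    (∃ j, j ≤ n₁ ∧ (wordDist S (γ i) (γ₁ j) : ℝ) ≤ δ) ∨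
    (∃ j, j ≤ n₂ ∧ (wordDist S (γ i) (γ₂ j) : ℝ) ≤ δ)

/-- `G` is hyperbolic with respect to `S`: every geodesic triangle in the Cayley graph is
`δ`-thin, i.e. each side is contained in the `δ`-neighbourhood of the other two sides. -/
def IsHyperbolic (S : Set G) : Prop :=
  ∃ δ : ℝ, 0 ≤ δ ∧ ∀ (a b c : G) (γ₁ γ₂ γ₃ : ℕ → G) (n₁ n₂ n₃ : ℕ),
    GeodesicFrom S γ₁ n₁ a b → GeodesicFrom S γ₂ n₂ b c → GeodesicFrom S γ₃ n₃ a c →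
    SideThin S δ γ₁ n₁ γ₂ n₂ γ₃ n₃ ∧ SideThin S δ γ₂ n₂ γ₁ n₁ γ₃ n₃ ∧
      SideThin S δ γ₃ n₃ γ₁ n₁ γ₂ n₂

/-- `G` is non-elementary: it contains no cyclic subgroup of finite index. -/
def NonElementary (G : Type*) [Group G] : Prop :=
  ¬ ∃ g : G, (Subgroup.zpowers g).FiniteIndex

/-- `S` is a symmetric subset of `G`. -/
def SymmetricSet (S : Set G) : Prop := ∀ g ∈ S, g⁻¹ ∈ S

/-- `#W_n`, the number of elements of `G` of word length `n`. -/
def Wcard (S : Set G) (n : ℕ) : ℕ := Nat.card {g : G // wordLength S g = n}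

/-- `#(W_n ∩ N)`, the number of elements of `N` of word length `n`. -/
def WNcard (S : Set G) (N : Subgroup G) (n : ℕ) : ℕ :=
  Nat.card {g : G // wordLength S g = n ∧ g ∈ N}

/-- Coornaert's purely exponential growth property: `C₁ λ^n ≤ #W_n ≤ C₂ λ^n`. -/
def HasGrowthRate (S : Set G) (lam : ℝ) : Prop :=
  ∃ C₁ C₂ : ℝ, 0 < C₁ ∧ 0 < C₂ ∧ ∀ n : ℕ, 1 ≤ n →
    C₁ * lam ^ n ≤ (Wcard S n : ℝ) ∧ (Wcard S n : ℝ) ≤ C₂ * lam ^ n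

/-! ### Strongly Markov structures -/

/-- The directed paths in the graph with edge set `E ⊆ V × V` starting at the vertex `star`;
a path with `n` edges is recorded by its `n+1` successive vertices. -/
def MarkovPaths (V : Type*) (E : Set (V × V)) (star : V) : Type _ :=
  {p : Σ n : ℕ, Fin (n + 1) → V //
    p.2 0 = star ∧ ∀ i : Fin p.1, (p.2 i.castSucc, p.2 i.succ) ∈ E}

/-- The group element obtained by multiplying the labels along a path. -/
def pathProd {V : Type*} {E : Set (V × V)} {star : V} (lab : V × V → G)
    (p : MarkovPaths V E star) : G :=
  (List.ofFn fun i : Fin p.1.1 => lab (p.1.2 i.castSucc, p.1.2 i.succ)).prod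

/-- A strongly Markov coding of `(G, S)`: a finite directed graph with labels in `S`,
an initial vertex `star` with no incoming edges, such that reading labels along paths
starting at `star` gives a bijection with `G` under which an `n`-edge path corresponds
to an element of word length `n`. -/
def IsMarkovCoding (S : Set G) {V : Type*} (E : Set (V × V)) (star : V)
    (lab : V × V → G) : Prop :=
  (∀ e ∈ E, lab e ∈ S) ∧ (∀ u : V, (u, star) ∉ E) ∧
  Function.Bijective (fun p : MarkovPaths V E star => pathProd lab p) ∧
  ∀ p : MarkovPaths V E star, wordLength S (pathProd lab p) = p.1.1

/-! ### Directed graphs, components and spectral radii -/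

/-- Reachability by a directed path in the graph with edge set `E`. -/
def Reach {V : Type*} (E : Set (V × V)) (u v : V) : Prop :=
  Relation.ReflTransGen (fun a b => (a, b) ∈ E) u v

/-- The strongly connected component of the vertex `u`. -/
def SCC {V : Type*} (E : Set (V × V)) (u : V) : Set V :=
  {v | Reach E u v ∧ Reach E v u}

/-- The 0-1 adjacency (transition) matrix of the graph with edge set `E`. -/
def adjMatrix (V : Type*) (E : Set (V × V)) : Matrix V V ℝ :=
  fun u v => if (u, v) ∈ E then 1 else 0

/-- The restriction (principal submatrix) of `M` to a set `s` of indices. -/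
def restrict {V : Type*} (M : Matrix V V ℝ) (s : Set V) : Matrix s s ℝ :=
  fun u v => M u.1 v.1

/-- The spectral radius of a real matrix: the maximum modulus of its complex eigenvalues. -/
def specRad {n : Type*} [Fintype n] [DecidableEq n] (M : Matrix n n ℝ) : ℝ≥0∞ :=
  spectralRadius ℂ (M.map Complex.ofReal)

/-- The spectral radius of a complex matrix. -/
def specRadC {n : Type*} [Fintype n] [DecidableEq n] (M : Matrix n n ℂ) : ℝ≥0∞ :=
  spectralRadius ℂ M

/-- `u` belongs to a maximal component: the strongly connected component of `u` has
adjacency matrix of spectral radius `lam`. -/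
def IsMaxComp {V : Type*} [Fintype V] (E : Set (V × V)) (lam : ℝ) (u : V) : Prop :=
  specRad (restrict (adjMatrix V E) (SCC E u)) = ENNReal.ofReal lam

/-- The collection of maximal components of the graph. -/
def MaxComps {V : Type*} [Fintype V] (E : Set (V × V)) (lam : ℝ) : Set (Set V) :=
  {s | ∃ u, IsMaxComp E lam u ∧ s = SCC E u}

/-- The matrix `C_j` associated to the maximal component `s`: entries meeting a maximal
component different from `s` are set to zero. -/
def Cmat {V : Type*} [Fintype V] (E : Set (V × V)) (lam : ℝ) (s : Set V) :
    Matrix V V ℝ := fun u v =>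
  if ∃ w, IsMaxComp E lam w ∧ SCC E w ≠ s ∧ (u ∈ SCC E w ∨ v ∈ SCC E w) then 0
  else adjMatrix V E u v

/-- The pairing `⟨t, x⟩ = ∑ i, t i * x i` of `t ∈ ℝ^ν` with `x ∈ ℤ^ν`. -/
def pairing {ν : ℕ} (t : Fin ν → ℝ) (x : Fin ν → ℤ) : ℝ :=
  ∑ i, t i * (x i : ℝ)

/-- `e2πi x = e^{2 π i x}`. -/
def e2πi (x : ℝ) : ℂ := Complex.exp (((2 * Real.pi * x : ℝ) : ℂ) * Complex.I)

/-- The weighted matrix `C_j(t)`, with entries `e^{2πi⟨t, f(u,v)⟩} C_j(u,v)`. -/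
def Ct {V : Type*} [Fintype V] (E : Set (V × V)) (lam : ℝ) (s : Set V) {ν : ℕ}
    (f : V × V → (Fin ν → ℤ)) (t : Fin ν → ℝ) : Matrix V V ℂ :=
  fun u v => e2πi (pairing t (f (u, v))) * (Cmat E lam s u v : ℂ)

/-- `⟨M v_*, 𝟏⟩`, where `v_*` is the indicator vector of `star` and `𝟏` the all-ones vector. -/
def starPairing {V : Type*} [Fintype V] (M : Matrix V V ℂ) (star : V) : ℂ :=
  dotProduct (fun _ : V => (1 : ℂ))
    (M.mulVec (fun v : V => if v = star then 1 else 0))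

/-! ### Cycles, weights, and the groups `Γ_f` and `Δ_f` -/

/-- A cycle of length `k ≥ 1` through vertices of `s`, recorded as `x 0, x 1, …, x k`
with `x 0 = x k` and all steps along edges of `E`. -/
def IsCycleIn {V : Type*} (E : Set (V × V)) (s : Set V) (k : ℕ) (x : ℕ → V) : Prop :=
  0 < k ∧ (∀ i, i ≤ k → x i ∈ s) ∧ x 0 = x k ∧ ∀ i, i < k → (x i, x (i + 1)) ∈ E

/-- The `f`-weight of a cycle. -/
def cycleWeight {V : Type*} {ν : ℕ} (f : V × V → (Fin ν → ℤ)) (k : ℕ) (x : ℕ → V) :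
    Fin ν → ℤ :=
  ∑ i ∈ Finset.range k, f (x i, x (i + 1))

/-- `p` is the period: the greatest common divisor of the lengths of the cycles in `s`. -/
def IsPeriod {V : Type*} (E : Set (V × V)) (s : Set V) (p : ℕ) : Prop :=
  0 < p ∧ (∀ k x, IsCycleIn E s k x → p ∣ k) ∧
    ∀ q : ℕ, (∀ k x, IsCycleIn E s k x → q ∣ k) → q ∣ p

/-- `Γ_f`: the subgroup of `ℤ^ν` generated by the `f`-weights of cycles. -/
def GammaGroup {V : Type*} (E : Set (V × V)) (s : Set V) {ν : ℕ}
    (f : V × V → (Fin ν → ℤ)) : AddSubgroup (Fin ν → ℤ) :=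
  AddSubgroup.closure {w | ∃ k x, IsCycleIn E s k x ∧ w = cycleWeight f k x}

/-- `Δ_f`: the subgroup of differences of `f`-weights of cycles of equal length. -/
def DeltaGroup {V : Type*} (E : Set (V × V)) (s : Set V) {ν : ℕ}
    (f : V × V → (Fin ν → ℤ)) : AddSubgroup (Fin ν → ℤ) :=
  AddSubgroup.closure {w | ∃ k x y, IsCycleIn E s k x ∧ IsCycleIn E s k y ∧
    w = cycleWeight f k x - cycleWeight f k y}

/-- The edge set of a nonnegative matrix `B`. -/
def Bedges {V : Type*} (B : Matrix V V ℝ) : Set (V × V) := {e | B e.1 e.2 ≠ 0}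

/-! ### Auxiliary material for Statement 5 -/

namespace S5Aux

section MatrixBasics

variable {α : Type*} [Fintype α] [DecidableEq α]

lemma mul_entry_nonneg {M N : Matrix α α ℝ} (hM : ∀ x y, 0 ≤ M x y)
    (hN : ∀ x y, 0 ≤ N x y) : ∀ x y, 0 ≤ (M * N) x y := by
  intro x y
  rw [Matrix.mul_apply]
  exact Finset.sum_nonneg fun z _ => mul_nonneg (hM _ _) (hN _ _)

lemma pow_entry_nonneg {M : Matrix α α ℝ} (hM : ∀ x y, 0 ≤ M x y) :
    ∀ (n : ℕ) (x y : α), 0 ≤ (M ^ n) x y := by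
  intro n
  induction n with
  | zero =>
    intro x y
    rcases eq_or_ne x y with h | h
    · simp [Matrix.one_apply, h]
    · simp [Matrix.one_apply, h]
  | succ n ih =>
    simp only [pow_succ]
    exact mul_entry_nonneg ih hM

lemma le_mul_apply {M N : Matrix α α ℝ} (hM : ∀ x y, 0 ≤ M x y)
    (hN : ∀ x y, 0 ≤ N x y) (a b c : α) : M a b * N b c ≤ (M * N) a c := by
  rw [Matrix.mul_apply]
  exact Finset.single_le_sum (f := fun z => M a z * N z c)
    (fun z _ => mul_nonneg (hM _ _) (hN _ _)) (Finset.mem_univ b)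

lemma le_sum_mul_apply {M N : Matrix α α ℝ} (hM : ∀ x y, 0 ≤ M x y)
    (hN : ∀ x y, 0 ≤ N x y) (a b : α) :
    M a b * ∑ y, N b y ≤ ∑ y, (M * N) a y := by
  rw [Finset.mul_sum]
  exact Finset.sum_le_sum fun y _ => le_mul_apply hM hN a b y

lemma le_pow_add_apply {M : Matrix α α ℝ} (hM : ∀ x y, 0 ≤ M x y)
    (m n : ℕ) (a b c : α) : (M ^ m) a b * (M ^ n) b c ≤ (M ^ (m + n)) a c := by
  rw [pow_add]
  exact le_mul_apply (pow_entry_nonneg hM m) (pow_entry_nonneg hM n) a b c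

lemma one_le_pow_of_rtg {M : Matrix α α ℝ} (hM : ∀ x y, 0 ≤ M x y)
    {r : α → α → Prop} (hr : ∀ a b, r a b → 1 ≤ M a b) {a b : α}
    (h : Relation.ReflTransGen r a b) : ∃ n, 1 ≤ (M ^ n) a b := by
  induction h with
  | refl => exact ⟨0, by simp [Matrix.one_apply_eq]⟩
  | @tail b c hab hbc ih =>
    obtain ⟨n, hn⟩ := ih
    refine ⟨n + 1, ?_⟩
    have h1 : (1 : ℝ) ≤ (M ^ n) a b * M b c := by
      have := mul_le_mul hn (hr _ _ hbc) zero_le_one (le_trans zero_le_one hn)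
      simpa using this
    calc (1:ℝ) ≤ (M ^ n) a b * M b c := h1
    _ ≤ (M ^ n * M) a c := le_mul_apply (pow_entry_nonneg hM n) hM a b c
    _ = (M ^ (n+1)) a c := by rw [← pow_succ]

lemma sum_subtype_le {s : Set α} {f : α → ℝ} (hf : ∀ z, 0 ≤ f z) :
    ∑ z : s, f z.1 ≤ ∑ z : α, f z := by
  classical
  have h1 : ∑ z : s, f z.1
      = ∑ z ∈ Finset.univ.map (Function.Embedding.subtype (· ∈ s)), f z := by
    rw [Finset.sum_map]
    rfl
  rw [h1]
  exact Finset.sum_le_sum_of_subset_of_nonneg (Finset.subset_univ _) fun i _ _ => hf i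

end MatrixBasics

/-- The unconditional "first exit" decomposition identity. -/
lemma proj_identity {R : Type*} [Ring R] (q c a : R) (hq : q * q = q) (hqc : q + c = 1) :
    ∀ n : ℕ, q * a ^ n =
      (∑ t ∈ Finset.range n, q * (q*a*q)^t * (q*a*c) * a^(n-1-t)) + q * (q*a*q)^n := by
  have hq' : ∀ x : R, q * (q * x) = q * x := fun x => by rw [← mul_assoc, hq]
  intro n
  induction n with
  | zero => simp
  | succ n ih =>
    have h1 : (q*a*q) * (q*a^n) = (q*a*q)*a^n := by
      calc (q*a*q) * (q*a^n) = q*a*(q*(q*a^n)) := by rw [mul_assoc (q*a) q (q * a^n)]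
      _ = q*a*(q*a^n) := by rw [hq']
      _ = (q*a*q)*a^n := by rw [← mul_assoc]
    have expand : q * a ^ (n+1) = (q*a*q) * (q * a^n) + (q*a*c) * a^n := by
      calc q * a^(n+1) = q*a*a^n := by rw [pow_succ', ← mul_assoc]
      _ = (q*a*(q+c))*a^n := by rw [hqc, mul_one]
      _ = (q*a*q)*a^n + (q*a*c)*a^n := by rw [mul_add, add_mul]
      _ = (q*a*q)*(q*a^n) + (q*a*c)*a^n := by rw [h1]
    have hsum : ∑ t ∈ Finset.range n, (q*a*q) * (q * (q*a*q)^t * (q*a*c) * a^(n-1-t))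
        = ∑ t ∈ Finset.range n, q * (q*a*q)^(t+1) * (q*a*c) * a^(n+1-1-(t+1)) := by
      refine Finset.sum_congr rfl fun t _ => ?_
      have he : n+1-1-(t+1) = n-1-t := by omega
      rw [he]
      simp only [pow_succ', mul_assoc, hq']
    have elast : (q*a*q) * (q * (q*a*q)^n) = q * (q*a*q)^(n+1) := by
      simp only [pow_succ', mul_assoc, hq']
    have e0 : q * (q*a*q)^0 * (q*a*c) * a^(n+1-1-0) = (q*a*c) * a^n := by
      simp only [pow_zero, mul_one, Nat.add_sub_cancel, Nat.sub_zero, mul_assoc, hq']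
    rw [expand, ih, mul_add, Finset.mul_sum, Finset.sum_range_succ' (fun t => q * (q*a*q)^t * (q*a*c) * a^(n+1-1-t)) n]
    rw [hsum, elast, e0]
    abel

section SCCLemmas

variable {V : Type*} (E : Set (V × V))

open Paper

lemma mem_scc_self (u : V) : u ∈ SCC E u :=
  ⟨Relation.ReflTransGen.refl, Relation.ReflTransGen.refl⟩

lemma scc_eq_of_mem {u w : V} (h : w ∈ SCC E u) : SCC E w = SCC E u := by
  obtain ⟨huw, hwu⟩ := h
  ext z
  constructor
  · rintro ⟨h1, h2⟩; exact ⟨huw.trans h1, h2.trans hwu⟩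
  · rintro ⟨h1, h2⟩; exact ⟨hwu.trans h1, h2.trans huw⟩

lemma rtg_subtype_to {u x : V} (hx : x ∈ SCC E u) :
    Relation.ReflTransGen (fun a b : (SCC E u) => (a.1, b.1) ∈ E) ⟨x, hx⟩ ⟨u, mem_scc_self E u⟩ := by
  have key : ∀ (x : V), Reach E x u → ∀ hx : x ∈ SCC E u,
      Relation.ReflTransGen (fun a b : (SCC E u) => (a.1, b.1) ∈ E) ⟨x, hx⟩ ⟨u, mem_scc_self E u⟩ := by
    intro x h
    induction h using Relation.ReflTransGen.head_induction_on with
    | refl => intro hx; exact Relation.ReflTransGen.refl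
    | @head a c hab hbu ih =>
      intro hx
      have hc : c ∈ SCC E u := ⟨hx.1.tail hab, hbu⟩
      exact Relation.ReflTransGen.head hab (ih hc)
  exact key x hx.2 hx

lemma rtg_subtype_from {u y : V} (hy : y ∈ SCC E u) :
    Relation.ReflTransGen (fun a b : (SCC E u) => (a.1, b.1) ∈ E) ⟨u, mem_scc_self E u⟩ ⟨y, hy⟩ := by
  have key : ∀ (y : V), Reach E u y → ∀ hy : y ∈ SCC E u,
      Relation.ReflTransGen (fun a b : (SCC E u) => (a.1, b.1) ∈ E) ⟨u, mem_scc_self E u⟩ ⟨y, hy⟩ := by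
    intro y h
    induction h with
    | refl => intro hy; exact Relation.ReflTransGen.refl
    | @tail b c hub hbc ih =>
      intro hc
      have hb : b ∈ SCC E u := ⟨hub, Relation.ReflTransGen.head hbc hc.2⟩
      exact Relation.ReflTransGen.tail (ih hb) hbc
  exact key y hy.1 hy

lemma rtg_subtype {u x y : V} (hx : x ∈ SCC E u) (hy : y ∈ SCC E u) :
    Relation.ReflTransGen (fun a b : (SCC E u) => (a.1, b.1) ∈ E) ⟨x, hx⟩ ⟨y, hy⟩ :=
  (rtg_subtype_to E hx).trans (rtg_subtype_from E hy)

lemma exists_walk {u v : V} (h : Reach E u v) :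
    ∃ (L : ℕ) (w : ℕ → V), w 0 = u ∧ w L = v ∧ ∀ i, i < L → (w i, w (i+1)) ∈ E := by
  induction h with
  | refl => exact ⟨0, fun _ => u, rfl, rfl, by omega⟩
  | @tail b c hub hbc ih =>
    obtain ⟨L, w, h0, hL, hE⟩ := ih
    refine ⟨L+1, fun i => if i ≤ L then w i else c, by simp [h0], ?_, ?_⟩
    · simp only [if_neg (by omega : ¬ (L+1 ≤ L))]
    · intro i hi
      rcases Nat.lt_or_ge i L with h | h
      · simp only [if_pos (le_of_lt h), if_pos (by omega : i + 1 ≤ L)]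
        exact hE i h
      · have hiL : i = L := by omega
        subst hiL
        simp only [if_pos (le_refl i), if_neg (by omega : ¬ (i+1 ≤ i))]
        rw [hL]
        exact hbc

lemma walk_reach {L : ℕ} {w : ℕ → V}
    (hE : ∀ i, i < L → (w i, w (i+1)) ∈ E) : ∀ k i, i + k = L → Reach E (w i) (w L) := by
  intro k
  induction k with
  | zero =>
    intro i hi
    rw [show i = L by omega]
    exact Relation.ReflTransGen.refl
  | succ k ih =>
    intro i hi
    exact Relation.ReflTransGen.head (hE i (by omega)) (ih (i+1) (by omega))

end SCCLemmas

section Restrict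

open Paper

variable {V : Type*} [Fintype V] [DecidableEq V]

lemma restrict_pow_le {M N : Matrix V V ℝ} {s : Set V}
    (hRnn : ∀ x y : s, 0 ≤ restrict M s x y)
    (hN : ∀ x y, 0 ≤ N x y)
    (hMN : ∀ x y : s, restrict M s x y ≤ N x.1 y.1) :
    ∀ (n : ℕ) (x y : s), ((restrict M s) ^ n) x y ≤ (N ^ n) x.1 y.1 := by
  intro n
  induction n with
  | zero =>
    intro x y
    rcases eq_or_ne x y with h | h
    · subst h
      simp [Matrix.one_apply_eq]
    · have h' : x.1 ≠ y.1 := fun hc => h (Subtype.ext hc)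
      rw [pow_zero, pow_zero, Matrix.one_apply_ne h, Matrix.one_apply_ne h']
  | succ n ih =>
    intro x y
    rw [pow_succ, pow_succ, Matrix.mul_apply, Matrix.mul_apply]
    have step1 : ∑ z : s, ((restrict M s)^n) x z * (restrict M s) z y
        ≤ ∑ z : s, (N^n) x.1 z.1 * N z.1 y.1 :=
      Finset.sum_le_sum fun z _ =>
        mul_le_mul (ih x z) (hMN z y) (hRnn z y) (pow_entry_nonneg hN n _ _)
    exact step1.trans
      (sum_subtype_le (f := fun z => (N ^ n) x.1 z * N z y.1)
        fun z => mul_nonneg (pow_entry_nonneg hN n _ _) (hN _ _))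

end Restrict

section Spectral

lemma pow_le_sum_entries {α : Type*} [Fintype α] [DecidableEq α] [Nonempty α]
    {M : Matrix α α ℝ} (hM : ∀ x y, 0 ≤ M x y) {lam : ℝ} (hlam : 0 < lam)
    (hspec : spectralRadius ℂ (M.map Complex.ofReal) = ENNReal.ofReal lam) :
    ∀ t : ℕ, lam ^ t ≤ ∑ x, ∑ y, (M ^ t) x y := by
  have hmap : ∀ k : ℕ, (M.map Complex.ofReal) ^ k = (M ^ k).map Complex.ofReal := by
    intro k
    induction k with
    | zero =>
      rw [pow_zero, pow_zero]
      exact (Matrix.map_one _ Complex.ofReal_zero Complex.ofReal_one).symm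
    | succ k ih =>
      rw [pow_succ, pow_succ, ih]
      have hfun : ⇑Complex.ofRealHom = Complex.ofReal := funext fun r => rfl
      have := (Matrix.map_mul (L := M ^ k) (M := M) (f := Complex.ofRealHom)).symm
      rw [hfun] at this
      exact this
  have key : ∀ (c : ℝ), 0 ≤ c → c < lam → ∀ t : ℕ, c ^ t ≤ ∑ x, ∑ y, (M ^ t) x y := by
    intro c hc hclam t
    obtain ⟨μ, hμmem, hμ⟩ : ∃ μ ∈ spectrum ℂ (M.map Complex.ofReal), c < ‖μ‖ := by
      have h1 : ENNReal.ofReal c < spectralRadius ℂ (M.map Complex.ofReal) := by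
        rw [hspec]
        exact (ENNReal.ofReal_lt_ofReal_iff hlam).mpr hclam
      have h2 : spectralRadius ℂ (M.map Complex.ofReal)
          = ⨆ μ ∈ spectrum ℂ (M.map Complex.ofReal), (‖μ‖₊ : ℝ≥0∞) := rfl
      rw [h2, lt_iSup_iff] at h1
      obtain ⟨μ, hμ2⟩ := h1
      rw [lt_iSup_iff] at hμ2
      obtain ⟨hmem, hμ2⟩ := hμ2
      refine ⟨μ, hmem, ?_⟩
      by_contra hcon
      push_neg at hcon
      have hle : (‖μ‖₊ : ℝ≥0∞) ≤ ENNReal.ofReal c := by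
        rw [← norm_toNNReal]
        exact ENNReal.ofReal_le_ofReal hcon
      exact absurd hμ2 (not_lt.mpr hle)
    obtain ⟨w, hw0, hvec⟩ : ∃ w : α → ℂ, w ≠ 0 ∧ (M.map Complex.ofReal).mulVec w = μ • w := by
      have h1 : ¬IsUnit (algebraMap ℂ (Matrix α α ℂ) μ - M.map Complex.ofReal) :=
        (spectrum.mem_iff).mp hμmem
      have h2 : (algebraMap ℂ (Matrix α α ℂ) μ - M.map Complex.ofReal).det = 0 := by
        by_contra hdet
        exact h1 ((Matrix.isUnit_iff_isUnit_det _).mpr (isUnit_iff_ne_zero.mpr hdet))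
      obtain ⟨w, hw, hw0⟩ := (Matrix.exists_mulVec_eq_zero_iff).mpr h2
      refine ⟨w, hw, ?_⟩
      have h3 : (algebraMap ℂ (Matrix α α ℂ) μ) = μ • (1 : Matrix α α ℂ) :=
        Algebra.algebraMap_eq_smul_one μ
      rw [h3, Matrix.sub_mulVec, Matrix.smul_mulVec, Matrix.one_mulVec,
        sub_eq_zero] at hw0
      exact hw0.symm
    have hiter : ∀ k : ℕ, ((M.map Complex.ofReal) ^ k).mulVec w = (μ ^ k) • w := by
      intro k
      induction k with
      | zero => simp [Matrix.one_mulVec]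
      | succ k ih =>
        rw [pow_succ', ← Matrix.mulVec_mulVec, ih, Matrix.mulVec_smul, hvec,
          smul_smul, ← pow_succ]
    obtain ⟨i0, -, hi0⟩ := Finset.exists_max_image Finset.univ (fun i => ‖w i‖)
      Finset.univ_nonempty
    have hwi0 : 0 < ‖w i0‖ := by
      rcases Function.ne_iff.mp hw0 with ⟨j, hj⟩
      calc (0:ℝ) < ‖w j‖ := by simpa using hj
      _ ≤ ‖w i0‖ := hi0 j (Finset.mem_univ j)
    have hest : ‖μ‖ ^ t * ‖w i0‖ ≤ (∑ x, ∑ y, (M ^ t) x y) * ‖w i0‖ := by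
      have e1 : ((M.map Complex.ofReal) ^ t).mulVec w i0 = (μ ^ t) * w i0 := by
        rw [hiter]; rfl
      calc ‖μ‖^t * ‖w i0‖ = ‖((M.map Complex.ofReal) ^ t).mulVec w i0‖ := by
            rw [e1, norm_mul, norm_pow]
      _ = ‖∑ j, ((M^t).map Complex.ofReal) i0 j * w j‖ := by
            rw [hmap]
            rfl
      _ ≤ ∑ j, ‖((M^t).map Complex.ofReal) i0 j * w j‖ := norm_sum_le _ _
      _ = ∑ j, (M^t) i0 j * ‖w j‖ := by
            refine Finset.sum_congr rfl fun j _ => ?_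
            rw [norm_mul, Matrix.map_apply, Complex.norm_real,
              Real.norm_eq_abs, abs_of_nonneg (pow_entry_nonneg hM t _ _)]
      _ ≤ ∑ j, (M^t) i0 j * ‖w i0‖ :=
            Finset.sum_le_sum fun j _ =>
              mul_le_mul_of_nonneg_left (hi0 j (Finset.mem_univ j)) (pow_entry_nonneg hM t _ _)
      _ = (∑ j, (M^t) i0 j) * ‖w i0‖ := (Finset.sum_mul _ _ _).symm
      _ ≤ (∑ x, ∑ y, (M^t) x y) * ‖w i0‖ := by
            refine mul_le_mul_of_nonneg_right ?_ (norm_nonneg _)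
            exact Finset.single_le_sum (f := fun x => ∑ y, (M^t) x y)
              (fun x _ => Finset.sum_nonneg fun y _ => pow_entry_nonneg hM t x y)
              (Finset.mem_univ i0)
    have h5 : ‖μ‖ ^ t ≤ ∑ x, ∑ y, (M^t) x y := le_of_mul_le_mul_right hest hwi0
    calc c ^ t ≤ ‖μ‖^t := pow_le_pow_left₀ hc hμ.le t
    _ ≤ _ := h5
  intro t
  rcases Nat.eq_zero_or_pos t with ht | ht
  · subst ht
    have h1 : ∑ x : α, ∑ y : α, ((M ^ 0) x y) = (Fintype.card α : ℝ) := by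
      simp [Matrix.one_apply, Finset.sum_ite_eq, Finset.card_univ]
    rw [h1, pow_zero]
    exact_mod_cast Fintype.card_pos
  · by_contra hcon
    push_neg at hcon
    set S := ∑ x, ∑ y, (M^t) x y with hS
    have hSnn : 0 ≤ S :=
      Finset.sum_nonneg fun x _ => Finset.sum_nonneg fun y _ => pow_entry_nonneg hM t x y
    set c := S ^ ((t:ℝ))⁻¹ with hc
    have hcnn : 0 ≤ c := Real.rpow_nonneg hSnn _
    have hct : c ^ t = S := by
      rw [hc, ← Real.rpow_natCast (S ^ ((t:ℝ))⁻¹) t, ← Real.rpow_mul hSnn,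
        inv_mul_cancel₀ (by exact_mod_cast (by omega : t ≠ 0)), Real.rpow_one]
    have hclam : c < lam := by
      apply lt_of_pow_lt_pow_left₀ t (le_of_lt hlam)
      rw [hct]
      exact hcon
    obtain ⟨c', hcc', hc'lam⟩ := exists_between hclam
    have hkey := key c' (le_trans hcnn (le_of_lt hcc')) hc'lam t
    have hlt : c ^ t < c' ^ t := pow_lt_pow_left₀ hcc' hcnn (by omega)
    rw [hct] at hlt
    rw [← hS] at hkey
    linarith

end Spectral

section Counting

lemma card_and_const {α : Type*} [Finite α] (p : α → Prop) (c : Prop) [Decidable c] :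
    (Nat.card {a : α // p a ∧ c} : ℝ)
      = (Nat.card {a : α // p a} : ℝ) * (if c then 1 else 0) := by
  by_cases h : c
  · rw [if_pos h, mul_one]
    have h2 := Nat.card_congr (Equiv.subtypeEquivRight (fun a => (and_iff_left h : p a ∧ c ↔ p a)))
    rw [h2]
  · rw [if_neg h, mul_zero]
    have : IsEmpty {a : α // p a ∧ c} := ⟨fun x => h x.2.2⟩
    rw [Nat.card_of_isEmpty]
    norm_num

lemma card_fiber_split {α : Type*} {β : Type*} [Fintype α] [Fintype β]
    (p : α → Prop) (f : α → β) :
    Nat.card {a : α // p a} = ∑ z : β, Nat.card {a : α // p a ∧ f a = z} := by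
  classical
  have e1 : {a : α // p a} ≃ Σ z : β, {q : {a : α // p a} // f q.1 = z} :=
    (Equiv.sigmaFiberEquiv (fun q : {a // p a} => f q.1)).symm
  rw [Nat.card_congr e1, Nat.card_eq_fintype_card, Fintype.card_sigma]
  refine Finset.sum_congr rfl fun z _ => ?_
  rw [← Nat.card_eq_fintype_card]
  exact Nat.card_congr (Equiv.subtypeSubtypeEquivSubtypeInter p (fun a => f a = z))

variable {V : Type*} [Fintype V]

lemma card_walks (E : Set (V × V)) (x : V) :
    ∀ (n : ℕ) (y : V),
      (Nat.card {w : Fin (n+1) → V // w 0 = x ∧ w (Fin.last n) = y ∧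
        ∀ i : Fin n, (w i.castSucc, w i.succ) ∈ E} : ℝ) = ((adjMatrix V E) ^ n) x y := by
  intro n
  induction n with
  | zero =>
    intro y
    rcases eq_or_ne x y with h | h
    · subst h
      have h1 : Nat.card {w : Fin 1 → V // w 0 = x ∧ w (Fin.last 0) = x ∧
          ∀ i : Fin 0, (w i.castSucc, w i.succ) ∈ E} = 1 := by
        haveI : Unique {w : Fin 1 → V // w 0 = x ∧ w (Fin.last 0) = x ∧
            ∀ i : Fin 0, (w i.castSucc, w i.succ) ∈ E} :=
          { default := ⟨fun _ => x, rfl, rfl, fun i => i.elim0⟩,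
            uniq := fun w => Subtype.ext (funext fun i => by
              have hi : i = 0 := Subsingleton.elim i 0
              rw [hi]
              exact w.2.1) }
        exact Nat.card_unique
      rw [h1, pow_zero, Matrix.one_apply_eq]
      norm_num
    · have h1 : IsEmpty {w : Fin 1 → V // w 0 = x ∧ w (Fin.last 0) = y ∧
          ∀ i : Fin 0, (w i.castSucc, w i.succ) ∈ E} := by
        refine ⟨fun w => h (w.2.1.symm.trans (w.2.2.1 : (w.1 : Fin 1 → V) 0 = y))⟩
      rw [Nat.card_of_isEmpty, pow_zero, Matrix.one_apply_ne h]
      norm_num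
  | succ n ih =>
    intro y
    have e1 : {w : Fin (n+2) → V // w 0 = x ∧ w (Fin.last (n+1)) = y ∧
        ∀ i : Fin (n+1), (w i.castSucc, w i.succ) ∈ E}
        ≃ {q : {w : Fin (n+1) → V // w 0 = x ∧ ∀ i : Fin n, (w i.castSucc, w i.succ) ∈ E} //
            (q.1 (Fin.last n), y) ∈ E} := by
      refine ⟨fun w => ⟨⟨Fin.init w.1, ?_, ?_⟩, ?_⟩, fun q => ⟨Fin.snoc q.1.1 y, ?_, ?_, ?_⟩, ?_, ?_⟩
      · show w.1 (Fin.castSucc 0) = x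
        obtain ⟨w, h0, hlast, hE⟩ := w
        rw [Fin.castSucc_zero]
        exact h0
      · intro i
        show (w.1 (i.castSucc.castSucc), w.1 (i.castSucc.succ)) ∈ E
        exact w.2.2.2 i.castSucc
      · show (w.1 ((Fin.last n).castSucc), y) ∈ E
        obtain ⟨w, h0, hlast, hE⟩ := w
        have h5 := hE (Fin.last n)
        rw [Fin.succ_last] at h5
        show (w ((Fin.last n).castSucc), y) ∈ E
        rw [← hlast]
        exact h5
      · have h7 : (Fin.snoc q.1.1 y : Fin (n+2) → V) (Fin.castSucc 0) = q.1.1 0 :=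
          Fin.snoc_castSucc _ _ _
        rw [Fin.castSucc_zero] at h7
        exact h7.trans q.1.2.1
      · exact Fin.snoc_last _ _
      · intro i
        induction i using Fin.lastCases with
        | last =>
          simp only [Fin.snoc_castSucc, Fin.succ_last, Fin.snoc_last]
          exact q.2
        | cast j =>
          simp only [Fin.succ_castSucc, Fin.snoc_castSucc]
          exact q.1.2.2 j
      · intro w
        apply Subtype.ext
        show Fin.snoc (Fin.init w.1) y = w.1
        obtain ⟨w, h0, hlast, hE⟩ := w
        show Fin.snoc (Fin.init w) y = w
        rw [← hlast]
        exact Fin.snoc_init_self w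
      · intro q
        apply Subtype.ext
        apply Subtype.ext
        refine funext fun i => ?_
        show (Fin.snoc (q.1.1 : Fin (n+1) → V) y : Fin (n+2) → V) i.castSucc = q.1.1 i
        exact Fin.snoc_castSucc _ _ _
    rw [Nat.card_congr e1,
      Nat.card_congr (Equiv.subtypeSubtypeEquivSubtypeInter
        (fun w : Fin (n+1) → V => w 0 = x ∧ ∀ i : Fin n, (w i.castSucc, w i.succ) ∈ E)
        (fun w => (w (Fin.last n), y) ∈ E))]
    rw [card_fiber_split
      (fun w : Fin (n+1) → V =>
        (w 0 = x ∧ ∀ i : Fin n, (w i.castSucc, w i.succ) ∈ E) ∧ (w (Fin.last n), y) ∈ E)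
      (fun w => w (Fin.last n))]
    rw [Nat.cast_sum]
    rw [pow_succ, Matrix.mul_apply]
    refine Finset.sum_congr rfl fun z _ => ?_
    have e2 : {w : Fin (n+1) → V //
        ((w 0 = x ∧ ∀ i : Fin n, (w i.castSucc, w i.succ) ∈ E) ∧ (w (Fin.last n), y) ∈ E)
          ∧ w (Fin.last n) = z}
        ≃ {w : Fin (n+1) → V //
            (w 0 = x ∧ w (Fin.last n) = z ∧ ∀ i : Fin n, (w i.castSucc, w i.succ) ∈ E)
              ∧ (z, y) ∈ E} := by
      refine Equiv.subtypeEquivRight fun w => ?_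
      constructor
      · rintro ⟨⟨⟨h0, hE⟩, hy⟩, hz⟩
        exact ⟨⟨h0, hz, hE⟩, by rwa [hz] at hy⟩
      · rintro ⟨⟨h0, hz, hE⟩, hy⟩
        exact ⟨⟨⟨h0, hE⟩, by rwa [← hz] at hy⟩, hz⟩
    rw [Nat.card_congr e2]
    rw [card_and_const _ ((z, y) ∈ E)]
    rw [ih z]
    rfl

lemma card_walks_from (E : Set (V × V)) (x : V) (n : ℕ) :
    (Nat.card {w : Fin (n+1) → V // w 0 = x ∧ ∀ i : Fin n, (w i.castSucc, w i.succ) ∈ E} : ℝ)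
      = ∑ y : V, ((adjMatrix V E) ^ n) x y := by
  rw [card_fiber_split
    (fun w : Fin (n+1) → V => w 0 = x ∧ ∀ i : Fin n, (w i.castSucc, w i.succ) ∈ E)
    (fun w => w (Fin.last n))]
  rw [Nat.cast_sum]
  refine Finset.sum_congr rfl fun z _ => ?_
  rw [← card_walks E x n z]
  congr 1
  exact Nat.card_congr (Equiv.subtypeEquivRight fun w => by tauto)

end Counting

end S5Aux

/-- Let `𝒢` be a finite directed graph with a vertex `star` from which
every vertex is reachable, and suppose the number of directed paths of length `n`
starting at `star` is at most `C λⁿ` (`λ > 1`, `C > 0`). Then no directed path begins in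
one maximal component (spectral radius `λ`) and ends in a different maximal component. -/
theorem statement5 {V : Type*} [Fintype V] (E : Set (V × V)) (star : V)
    (hreach : ∀ v : V, Reach E star v)
    (lam C : ℝ) (hlam : 1 < lam) (hC : 0 < C)
    (hcount : ∀ n : ℕ, 1 ≤ n →
      (Nat.card {x : Fin (n + 1) → V //
          x 0 = star ∧ ∀ i : Fin n, (x i.castSucc, x i.succ) ∈ E} : ℝ) ≤ C * lam ^ n)
    (u v : V) (hu : IsMaxComp E lam u) (hv : IsMaxComp E lam v)
    (huv : Reach E u v) :
    SCC E u = SCC E v := by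
  classical
  by_contra hne
  set A := adjMatrix V E with hA
  have hAnn : ∀ x y : V, 0 ≤ A x y := by
    intro x y
    rw [hA]
    simp only [adjMatrix]
    split <;> norm_num
  have hAedge : ∀ {x y : V}, (x, y) ∈ E → 1 ≤ A x y := by
    intro x y h
    rw [hA]
    simp only [adjMatrix]
    rw [if_pos h]
  have hu1 : u ∈ SCC E u := S5Aux.mem_scc_self E u
  have hv2 : v ∈ SCC E v := S5Aux.mem_scc_self E v
  have hvns1 : v ∉ SCC E u := fun h => hne (S5Aux.scc_eq_of_mem E h).symm
  set A1 := restrict A (SCC E u) with hA1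
  set A2 := restrict A (SCC E v) with hA2
  have hA1nn : ∀ x y, 0 ≤ A1 x y := fun x y => hAnn _ _
  have hA2nn : ∀ x y, 0 ≤ A2 x y := fun x y => hAnn _ _
  haveI hne1 : Nonempty (SCC E u) := ⟨⟨u, hu1⟩⟩
  haveI hne2 : Nonempty (SCC E v) := ⟨⟨v, hv2⟩⟩
  have hlam0 : (0:ℝ) < lam := lt_trans one_pos hlam
  have hsum1 : ∀ t : ℕ, lam ^ t ≤ ∑ x : SCC E u, ∑ y : SCC E u, (A1 ^ t) x y :=
    S5Aux.pow_le_sum_entries hA1nn hlam0 hu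
  have hsum2 : ∀ t : ℕ, lam ^ t ≤ ∑ x : SCC E v, ∑ y : SCC E v, (A2 ^ t) x y :=
    S5Aux.pow_le_sum_entries hA2nn hlam0 hv
  -- distances inside the components
  have hpow1 : ∀ x y : SCC E u, ∃ d : ℕ, 1 ≤ (A1 ^ d) x y := by
    intro x y
    exact S5Aux.one_le_pow_of_rtg hA1nn
      (r := fun a b : SCC E u => (a.1, b.1) ∈ E)
      (fun a b hab => hAedge hab) (S5Aux.rtg_subtype E x.2 y.2)
  have hpow2 : ∀ x y : SCC E v, ∃ d : ℕ, 1 ≤ (A2 ^ d) x y := by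
    intro x y
    exact S5Aux.one_le_pow_of_rtg hA2nn
      (r := fun a b : SCC E v => (a.1, b.1) ∈ E)
      (fun a b hab => hAedge hab) (S5Aux.rtg_subtype E x.2 y.2)
  choose d1 hd1 using hpow1
  choose d2 hd2 using hpow2
  set D1 := Finset.univ.sup (fun p : (SCC E u) × (SCC E u) => d1 p.1 p.2) with hD1def
  have hD1 : ∀ x y, d1 x y ≤ D1 :=
    fun x y => Finset.le_sup (f := fun p : (SCC E u) × (SCC E u) => d1 p.1 p.2)
      (Finset.mem_univ (x, y))
  set D2 := Finset.univ.sup (fun p : (SCC E v) × (SCC E v) => d2 p.1 p.2) with hD2def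
  have hD2 : ∀ x y, d2 x y ≤ D2 :=
    fun x y => Finset.le_sup (f := fun p : (SCC E v) × (SCC E v) => d2 p.1 p.2)
      (Finset.mem_univ (x, y))
  set uu : SCC E u := ⟨u, hu1⟩ with huu
  set vv : SCC E v := ⟨v, hv2⟩ with hvv
  set K1 : ℝ := (Fintype.card (SCC E u) : ℝ) * (Fintype.card (SCC E u) : ℝ) with hK1
  have hcard1pos : (0:ℝ) < (Fintype.card (SCC E u) : ℝ) := by exact_mod_cast Fintype.card_pos
  have hK1pos : 0 < K1 := by rw [hK1]; exact mul_pos hcard1pos hcard1pos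
  set K2 : ℝ := (Fintype.card (SCC E v) : ℝ) with hK2
  have hK2pos : 0 < K2 := by rw [hK2]; exact_mod_cast Fintype.card_pos
  -- Fact L : big diagonal entries of powers of A1 at uu, in windows of length 2*D1
  have factL : ∀ t : ℕ, ∃ t', t ≤ t' ∧ t' ≤ t + 2*D1 ∧ lam ^ t / K1 ≤ (A1 ^ t') uu uu := by
    intro t
    have hexist : ∃ x y : SCC E u, lam ^ t / K1 ≤ (A1 ^ t) x y := by
      by_contra hco
      push_neg at hco
      have hstrict : ∑ x : SCC E u, ∑ y : SCC E u, (A1^t) x y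
          < ∑ _x : SCC E u, ∑ _y : SCC E u, (lam ^ t / K1) := by
        refine Finset.sum_lt_sum_of_nonempty Finset.univ_nonempty fun x _ => ?_
        exact Finset.sum_lt_sum_of_nonempty Finset.univ_nonempty fun y _ => hco x y
      have heval : ∑ _x : SCC E u, ∑ _y : SCC E u, (lam ^ t / K1 : ℝ) = lam ^ t := by
        rw [Finset.sum_const, Finset.sum_const, Finset.card_univ, nsmul_eq_mul, nsmul_eq_mul,
          ← mul_assoc, ← hK1, mul_comm, div_mul_cancel₀ _ (ne_of_gt hK1pos)]
      rw [heval] at hstrict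
      exact absurd (hsum1 t) (not_le.mpr hstrict)
    obtain ⟨x, y, hxy⟩ := hexist
    refine ⟨d1 uu x + (t + d1 y uu), by omega, ?_, ?_⟩
    · have h1 := hD1 uu x
      have h2 := hD1 y uu
      omega
    · have hnn : (0:ℝ) ≤ lam ^ t / K1 := div_nonneg (pow_nonneg hlam0.le t) hK1pos.le
      calc lam ^ t / K1 ≤ (A1^t) x y := hxy
      _ ≤ (A1^t) x y * (A1 ^ (d1 y uu)) y uu :=
          le_mul_of_one_le_right (le_trans hnn hxy) (hd1 y uu)
      _ ≤ (A1 ^ (t + d1 y uu)) x uu := S5Aux.le_pow_add_apply hA1nn _ _ _ _ _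
      _ = 1 * (A1 ^ (t + d1 y uu)) x uu := (one_mul _).symm
      _ ≤ (A1 ^ (d1 uu x)) uu x * (A1 ^ (t + d1 y uu)) x uu :=
          mul_le_mul_of_nonneg_right (hd1 uu x) (S5Aux.pow_entry_nonneg hA1nn _ _ _)
      _ ≤ (A1 ^ (d1 uu x + (t + d1 y uu))) uu uu := S5Aux.le_pow_add_apply hA1nn _ _ _ _ _
  -- out-degrees in the component of v
  have hA2ne : ∃ z w : SCC E v, 1 ≤ A2 z w := by
    by_contra hco
    push_neg at hco
    have hzero : ∀ z w : SCC E v, A2 z w = 0 := by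
      intro z w
      have h1 := hco z w
      by_cases h : (z.1, w.1) ∈ E
      · exact absurd (hAedge h : 1 ≤ A2 z w) (not_le.mpr h1)
      · show A z.1 w.1 = 0
        rw [hA]
        simp only [adjMatrix]
        rw [if_neg h]
    have h2 := hsum2 1
    have h3 : ∑ z : SCC E v, ∑ w : SCC E v, (A2 ^ 1) z w = 0 := by
      rw [pow_one]
      simp [hzero]
    rw [h3] at h2
    linarith
  obtain ⟨z0, w0, hz0w0⟩ := hA2ne
  have hout2 : ∀ z : SCC E v, ∃ w : SCC E v, 1 ≤ A2 z w := by
    intro z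
    have hrt := S5Aux.rtg_subtype E z.2 z0.2
    rcases Relation.ReflTransGen.cases_head hrt with heq | ⟨b, hzb, -⟩
    · refine ⟨w0, ?_⟩
      have hzz : z = z0 := heq
      rw [hzz]
      exact hz0w0
    · exact ⟨b, hAedge hzb⟩
  -- monotone row sums from vv
  set RS : ℕ → ℝ := fun j => ∑ y : SCC E v, (A2 ^ j) vv y with hRS
  have hRSnn : ∀ j, 0 ≤ RS j := fun j =>
    Finset.sum_nonneg fun y _ => S5Aux.pow_entry_nonneg hA2nn _ _ _
  have hRSmono : Monotone RS := by
    apply monotone_nat_of_le_succ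
    intro j
    have h1 : RS (j+1) = ∑ z : SCC E v, (A2^j) vv z * ∑ y : SCC E v, A2 z y := by
      simp only [hRS, pow_succ, Matrix.mul_apply]
      rw [Finset.sum_comm]
      exact Finset.sum_congr rfl fun z _ => (Finset.mul_sum _ _ _).symm
    have h2 : RS j = ∑ z : SCC E v, (A2^j) vv z * 1 := by
      simp only [hRS, mul_one]
    rw [h1, h2]
    refine Finset.sum_le_sum fun z _ => ?_
    refine mul_le_mul_of_nonneg_left ?_ (S5Aux.pow_entry_nonneg hA2nn _ _ _)
    obtain ⟨wz, hwz⟩ := hout2 z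
    exact le_trans hwz (Finset.single_le_sum (fun w _ => hA2nn z w) (Finset.mem_univ wz))
  have factR : ∀ j : ℕ, D2 ≤ j → lam ^ (j - D2) / K2 ≤ RS j := by
    intro j hj
    have hrow : ∃ x : SCC E v, lam ^ (j - D2) / K2 ≤ ∑ y : SCC E v, (A2^(j - D2)) x y := by
      by_contra hco
      push_neg at hco
      have hstrict : ∑ x : SCC E v, ∑ y : SCC E v, (A2^(j-D2)) x y
          < ∑ _x : SCC E v, (lam^(j-D2) / K2 : ℝ) :=
        Finset.sum_lt_sum_of_nonempty Finset.univ_nonempty fun x _ => hco x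
      have heval : ∑ _x : SCC E v, (lam^(j-D2)/K2 : ℝ) = lam^(j-D2) := by
        rw [Finset.sum_const, Finset.card_univ, nsmul_eq_mul, ← hK2, mul_comm,
          div_mul_cancel₀ _ (ne_of_gt hK2pos)]
      rw [heval] at hstrict
      exact absurd (hsum2 (j-D2)) (not_le.mpr hstrict)
    obtain ⟨x, hx⟩ := hrow
    have h1 : lam^(j-D2)/K2 ≤ RS (d2 vv x + (j-D2)) := by
      calc lam^(j-D2)/K2 ≤ ∑ y : SCC E v, (A2^(j-D2)) x y := hx
      _ = 1 * ∑ y : SCC E v, (A2^(j-D2)) x y := (one_mul _).symm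
      _ ≤ (A2^(d2 vv x)) vv x * ∑ y : SCC E v, (A2^(j-D2)) x y :=
          mul_le_mul_of_nonneg_right (hd2 vv x)
            (Finset.sum_nonneg fun y _ => S5Aux.pow_entry_nonneg hA2nn _ _ _)
      _ ≤ ∑ y : SCC E v, (A2^(d2 vv x) * A2^(j-D2)) vv y :=
          S5Aux.le_sum_mul_apply (S5Aux.pow_entry_nonneg hA2nn _)
            (S5Aux.pow_entry_nonneg hA2nn _) vv x
      _ = RS (d2 vv x + (j-D2)) := by
          simp only [hRS, pow_add]
    exact h1.trans (hRSmono (by have := hD2 vv x; omega))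
  -- the bridge
  obtain ⟨L, w, hw0, hwL, hwE⟩ := S5Aux.exists_walk E huv
  have hP0 : w 0 ∈ SCC E u := by rw [hw0]; exact hu1
  have hPt0 : w (Nat.findGreatest (fun i => w i ∈ SCC E u) L) ∈ SCC E u :=
    Nat.findGreatest_spec (P := fun i => w i ∈ SCC E u) (Nat.zero_le L) hP0
  set t0 := Nat.findGreatest (fun i => w i ∈ SCC E u) L with ht0
  have ht0le : t0 ≤ L := Nat.findGreatest_le L
  have ht0lt : t0 < L := by
    rcases lt_or_eq_of_le ht0le with h | h
    · exact h
    · exfalso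
      apply hvns1
      rw [← hwL, ← h]
      exact hPt0
  have hqns1 : w (t0+1) ∉ SCC E u :=
    Nat.findGreatest_is_greatest (P := fun i => w i ∈ SCC E u) (n := L) (by omega) (by omega)
  have hpq : (w t0, w (t0+1)) ∈ E := hwE t0 ht0lt
  set pp : SCC E u := ⟨w t0, hPt0⟩ with hpp
  have hreachqv : Reach E (w (t0+1)) v := by
    have h1 := S5Aux.walk_reach E hwE (L - (t0+1)) (t0+1) (by omega)
    rwa [hwL] at h1
  obtain ⟨b, hb⟩ := S5Aux.one_le_pow_of_rtg hAnn (fun x y h => hAedge h) hreachqv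
  obtain ⟨e0, he0⟩ := S5Aux.one_le_pow_of_rtg hAnn (fun x y h => hAedge h) (hreach u)
  set a := d1 uu pp with hadef
  -- projection matrices
  set Qm : Matrix V V ℝ := Matrix.diagonal (fun x => if x ∈ SCC E u then (1:ℝ) else 0) with hQm
  set Qc : Matrix V V ℝ := Matrix.diagonal (fun x => if x ∈ SCC E u then (0:ℝ) else 1) with hQc
  have hqq : Qm * Qm = Qm := by
    rw [hQm, Matrix.diagonal_mul_diagonal]
    exact congrArg Matrix.diagonal (funext fun x => by by_cases h : x ∈ SCC E u <;> simp [h])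
  have hqqc : Qm + Qc = 1 := by
    rw [hQm, hQc, Matrix.diagonal_add, ← Matrix.diagonal_one]
    exact congrArg Matrix.diagonal (funext fun x => by by_cases h : x ∈ SCC E u <;> simp [h])
  have hQmnn : ∀ x y, 0 ≤ Qm x y := by
    intro x y
    rw [hQm]
    by_cases h : x = y
    · subst h
      rw [Matrix.diagonal_apply_eq]
      split <;> norm_num
    · rw [Matrix.diagonal_apply_ne _ h]
  have hQcnn : ∀ x y, 0 ≤ Qc x y := by
    intro x y
    rw [hQc]
    by_cases h : x = y
    · subst h
      rw [Matrix.diagonal_apply_eq]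
      split <;> norm_num
    · rw [Matrix.diagonal_apply_ne _ h]
  have hQAQnn : ∀ x y, 0 ≤ (Qm*A*Qm) x y :=
    S5Aux.mul_entry_nonneg (S5Aux.mul_entry_nonneg hQmnn hAnn) hQmnn
  have hQAQcnn : ∀ x y, 0 ≤ (Qm*A*Qc) x y :=
    S5Aux.mul_entry_nonneg (S5Aux.mul_entry_nonneg hQmnn hAnn) hQcnn
  have hA1le : ∀ (k : ℕ) (x y : SCC E u), (A1^k) x y ≤ ((Qm*A*Qm)^k) x.1 y.1 := by
    have h0 : ∀ x y : SCC E u, A1 x y ≤ (Qm*A*Qm) x.1 y.1 := by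
      intro x y
      have h1 : (Qm*A*Qm) x.1 y.1 = A x.1 y.1 := by
        rw [hQm, Matrix.mul_diagonal, Matrix.diagonal_mul, if_pos x.2, if_pos y.2,
          one_mul, mul_one]
      rw [h1]
      exact le_refl _
    intro k x y
    exact S5Aux.restrict_pow_le hA1nn hQAQnn h0 k x y
  have hA2le : ∀ (k : ℕ) (x y : SCC E v), (A2^k) x y ≤ (A^k) x.1 y.1 :=
    fun k x y => S5Aux.restrict_pow_le hA2nn hAnn (fun x y => le_refl _) k x y
  have hbridge : 1 ≤ (Qm*A*Qc) (w t0) (w (t0+1)) := by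
    have h1 : (Qm*A*Qc) (w t0) (w (t0+1)) = A (w t0) (w (t0+1)) := by
      rw [hQm, hQc, Matrix.mul_diagonal, Matrix.diagonal_mul, if_pos hPt0, if_neg hqns1,
        one_mul, mul_one]
    rw [h1]
    exact hAedge hpq
  -- choice of the number of windows
  set c5 := 1 + a + b + 2*D1 + D2 with hc5
  obtain ⟨m0, hm0⟩ := exists_nat_gt (C * K1 * K2 * lam ^ (e0 + c5))
  set m := m0 + 1 with hmdef
  have hm : C * K1 * K2 * lam ^ (e0 + c5) < (m:ℝ) := by
    refine hm0.trans ?_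
    exact_mod_cast Nat.lt_succ_self m0
  have hm1 : 1 ≤ m := by omega
  set n := m*(2*D1+1) + a + b + 1 + D2 with hn
  choose f hf1 hf2 hf3 using factL
  set T : ℕ → ℕ := fun k => f (k*(2*D1+1)) + a with hT
  have hTmono : StrictMono T := by
    intro k k' hkk'
    have h1 : f (k*(2*D1+1)) ≤ k*(2*D1+1) + 2*D1 := hf2 _
    have h2 : k'*(2*D1+1) ≤ f (k'*(2*D1+1)) := hf1 _
    have h3 : k*(2*D1+1) + (2*D1+1) ≤ k'*(2*D1+1) := by
      calc k*(2*D1+1) + (2*D1+1) = (k+1)*(2*D1+1) := by ring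
      _ ≤ k'*(2*D1+1) := Nat.mul_le_mul_right _ hkk'
    simp only [hT]
    omega
  have hTbound : ∀ k, k < m → T k + b + 1 + D2 ≤ n := by
    intro k hk
    have h1 : f (k*(2*D1+1)) ≤ k*(2*D1+1) + 2*D1 := hf2 _
    have h2 : (k+1)*(2*D1+1) ≤ m*(2*D1+1) := Nat.mul_le_mul_right _ (by omega)
    have h3 : k*(2*D1+1) + (2*D1+1) = (k+1)*(2*D1+1) := by ring
    have h4 : T k = f (k*(2*D1+1)) + a := by simp only [hT]
    omega
  have hid := S5Aux.proj_identity Qm Qc A hqq hqqc n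
  set F : ℕ → ℝ := fun t => ∑ y : V, (Qm * (Qm*A*Qm)^t * (Qm*A*Qc) * A^(n-1-t)) u y with hF
  have hFnn : ∀ t, 0 ≤ F t := by
    intro t
    refine Finset.sum_nonneg fun y _ => ?_
    exact S5Aux.mul_entry_nonneg
      (S5Aux.mul_entry_nonneg
        (S5Aux.mul_entry_nonneg hQmnn (S5Aux.pow_entry_nonneg hQAQnn t)) hQAQcnn)
      (S5Aux.pow_entry_nonneg hAnn _) u y
  have hQrow : ∀ (Mx : Matrix V V ℝ) (y : V), (Qm * Mx) u y = Mx u y := by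
    intro Mx y
    rw [hQm, Matrix.diagonal_mul, if_pos hu1, one_mul]
  have hsumrow : ∑ y : V, (A^n) u y
      = (∑ t ∈ Finset.range n, F t) + ∑ y : V, (Qm*(Qm*A*Qm)^n) u y := by
    calc ∑ y : V, (A^n) u y = ∑ y : V, (Qm * A^n) u y := by
          exact Finset.sum_congr rfl fun y _ => (hQrow _ y).symm
    _ = ∑ y : V, ((∑ t ∈ Finset.range n, Qm * (Qm*A*Qm)^t * (Qm*A*Qc) * A^(n-1-t))
          + Qm * (Qm*A*Qm)^n) u y := by
          exact Finset.sum_congr rfl fun y _ => by rw [hid]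
    _ = (∑ t ∈ Finset.range n, F t) + ∑ y : V, (Qm*(Qm*A*Qm)^n) u y := by
          simp only [Matrix.add_apply, Matrix.sum_apply]
          rw [Finset.sum_add_distrib, Finset.sum_comm]
  have hrowid : (∑ t ∈ Finset.range n, F t) ≤ ∑ y : V, (A^n) u y := by
    rw [hsumrow]
    refine le_add_of_nonneg_right ?_
    refine Finset.sum_nonneg fun y _ => ?_
    exact S5Aux.mul_entry_nonneg hQmnn (S5Aux.pow_entry_nonneg hQAQnn n) u y
  -- the crucial lower bound on F (T k)
  have hFbound : ∀ k, k < m → lam ^ (n - c5) / (K1*K2) ≤ F (T k) := by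
    intro k hk
    have hTk : T k = f (k*(2*D1+1)) + a := by simp only [hT]
    have hfk1 : k*(2*D1+1) ≤ f (k*(2*D1+1)) := hf1 _
    have hfk2 : f (k*(2*D1+1)) ≤ k*(2*D1+1) + 2*D1 := hf2 _
    have hTb := hTbound k hk
    have hjdef : n - 1 - T k = b + (n - 1 - T k - b) := by omega
    set j := n - 1 - T k - b with hj
    have hjD2 : D2 ≤ j := by omega
    have hsplit : Qm * (Qm*A*Qm)^(T k) * (Qm*A*Qc) * A^(n-1-T k)
        = Qm * ((Qm*A*Qm)^(f (k*(2*D1+1))) * ((Qm*A*Qm)^a * ((Qm*A*Qc) * (A^b * A^j)))) := by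
      rw [hjdef, hTk, pow_add, pow_add]
      simp only [mul_assoc]
    have hS0 : lam^(j-D2)/K2 ≤ ∑ y : V, (A^j) v y := by
      refine (factR j hjD2).trans ?_
      refine le_trans (Finset.sum_le_sum fun y _ => hA2le j vv y) ?_
      exact S5Aux.sum_subtype_le (f := fun y => (A^j) v y)
        (fun y => S5Aux.pow_entry_nonneg hAnn j v y)
    have hS0nn : (0:ℝ) ≤ ∑ y : V, (A^j) v y :=
      Finset.sum_nonneg fun y _ => S5Aux.pow_entry_nonneg hAnn j v y
    have hS1 : ∑ y : V, (A^j) v y ≤ ∑ y : V, (A^b * A^j) (w (t0+1)) y := by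
      calc ∑ y : V, (A^j) v y = 1 * ∑ y : V, (A^j) v y := (one_mul _).symm
      _ ≤ (A^b) (w (t0+1)) v * ∑ y : V, (A^j) v y :=
          mul_le_mul_of_nonneg_right hb hS0nn
      _ ≤ ∑ y : V, (A^b * A^j) (w (t0+1)) y :=
          S5Aux.le_sum_mul_apply (S5Aux.pow_entry_nonneg hAnn b)
            (S5Aux.pow_entry_nonneg hAnn j) _ v
    have hS1nn : (0:ℝ) ≤ ∑ y : V, (A^b * A^j) (w (t0+1)) y :=
      Finset.sum_nonneg fun y _ => S5Aux.mul_entry_nonneg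
        (S5Aux.pow_entry_nonneg hAnn b) (S5Aux.pow_entry_nonneg hAnn j) _ y
    have hS2 : ∑ y : V, (A^b * A^j) (w (t0+1)) y
        ≤ ∑ y : V, ((Qm*A*Qc) * (A^b * A^j)) (w t0) y := by
      calc ∑ y : V, (A^b * A^j) (w (t0+1)) y
          = 1 * ∑ y : V, (A^b * A^j) (w (t0+1)) y := (one_mul _).symm
      _ ≤ (Qm*A*Qc) (w t0) (w (t0+1)) * ∑ y : V, (A^b * A^j) (w (t0+1)) y :=
          mul_le_mul_of_nonneg_right hbridge hS1nn
      _ ≤ ∑ y : V, ((Qm*A*Qc) * (A^b * A^j)) (w t0) y :=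
          S5Aux.le_sum_mul_apply hQAQcnn
            (S5Aux.mul_entry_nonneg (S5Aux.pow_entry_nonneg hAnn b)
              (S5Aux.pow_entry_nonneg hAnn j)) _ _
    have hS2nn : (0:ℝ) ≤ ∑ y : V, ((Qm*A*Qc) * (A^b * A^j)) (w t0) y :=
      Finset.sum_nonneg fun y _ => S5Aux.mul_entry_nonneg hQAQcnn
        (S5Aux.mul_entry_nonneg (S5Aux.pow_entry_nonneg hAnn b)
          (S5Aux.pow_entry_nonneg hAnn j)) _ y
    have hS3 : ∑ y : V, ((Qm*A*Qc) * (A^b * A^j)) (w t0) y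
        ≤ ∑ y : V, ((Qm*A*Qm)^a * ((Qm*A*Qc) * (A^b * A^j))) u y := by
      have hup : (1:ℝ) ≤ ((Qm*A*Qm)^a) u (w t0) := le_trans (hd1 uu pp) (hA1le a uu pp)
      calc ∑ y : V, ((Qm*A*Qc) * (A^b * A^j)) (w t0) y
          = 1 * ∑ y : V, ((Qm*A*Qc) * (A^b * A^j)) (w t0) y := (one_mul _).symm
      _ ≤ ((Qm*A*Qm)^a) u (w t0) * ∑ y : V, ((Qm*A*Qc) * (A^b * A^j)) (w t0) y :=
          mul_le_mul_of_nonneg_right hup hS2nn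
      _ ≤ ∑ y : V, ((Qm*A*Qm)^a * ((Qm*A*Qc) * (A^b * A^j))) u y :=
          S5Aux.le_sum_mul_apply (S5Aux.pow_entry_nonneg hQAQnn a)
            (S5Aux.mul_entry_nonneg hQAQcnn
              (S5Aux.mul_entry_nonneg (S5Aux.pow_entry_nonneg hAnn b)
                (S5Aux.pow_entry_nonneg hAnn j))) _ _
    have hmid : ∀ x y, 0 ≤ ((Qm*A*Qm)^a * ((Qm*A*Qc) * (A^b * A^j))) x y :=
      S5Aux.mul_entry_nonneg (S5Aux.pow_entry_nonneg hQAQnn a)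
        (S5Aux.mul_entry_nonneg hQAQcnn
          (S5Aux.mul_entry_nonneg (S5Aux.pow_entry_nonneg hAnn b)
            (S5Aux.pow_entry_nonneg hAnn j)))
    have hS3nn : (0:ℝ) ≤ ∑ y : V, ((Qm*A*Qm)^a * ((Qm*A*Qc) * (A^b * A^j))) u y :=
      Finset.sum_nonneg fun y _ => hmid _ y
    have hS4 : ((A1^(f (k*(2*D1+1)))) uu uu) * ∑ y : V, ((Qm*A*Qm)^a * ((Qm*A*Qc) * (A^b * A^j))) u y
        ≤ ∑ y : V, ((Qm*A*Qm)^(f (k*(2*D1+1))) * ((Qm*A*Qm)^a * ((Qm*A*Qc) * (A^b * A^j)))) u y := by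
      calc ((A1^(f (k*(2*D1+1)))) uu uu) * ∑ y : V, ((Qm*A*Qm)^a * ((Qm*A*Qc) * (A^b * A^j))) u y
          ≤ (((Qm*A*Qm)^(f (k*(2*D1+1)))) u u) * ∑ y : V, ((Qm*A*Qm)^a * ((Qm*A*Qc) * (A^b * A^j))) u y :=
            mul_le_mul_of_nonneg_right (hA1le _ uu uu) hS3nn
      _ ≤ _ :=
            S5Aux.le_sum_mul_apply (S5Aux.pow_entry_nonneg hQAQnn _) hmid _ _
    have hnest : ∀ x y, 0 ≤ ((Qm*A*Qm)^(f (k*(2*D1+1))) * ((Qm*A*Qm)^a * ((Qm*A*Qc) * (A^b * A^j)))) x y :=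
      S5Aux.mul_entry_nonneg (S5Aux.pow_entry_nonneg hQAQnn _) hmid
    have hS5 : ∑ y : V, ((Qm*A*Qm)^(f (k*(2*D1+1))) * ((Qm*A*Qm)^a * ((Qm*A*Qc) * (A^b * A^j)))) u y
        ≤ F (T k) := by
      have h1 : F (T k) = ∑ y : V,
          (Qm * ((Qm*A*Qm)^(f (k*(2*D1+1))) * ((Qm*A*Qm)^a * ((Qm*A*Qc) * (A^b * A^j))))) u y := by
        simp only [hF]
        refine Finset.sum_congr rfl fun y _ => ?_
        rw [show Qm * (Qm*A*Qm)^(T k) * (Qm*A*Qc) * A^(n-1-T k)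
          = Qm * ((Qm*A*Qm)^(f (k*(2*D1+1))) * ((Qm*A*Qm)^a * ((Qm*A*Qc) * (A^b * A^j)))) from hsplit]
      rw [h1]
      refine Finset.sum_le_sum fun y _ => ?_
      rw [hQrow]
    -- combine everything
    have hA1fknn : (0:ℝ) ≤ (A1^(f (k*(2*D1+1)))) uu uu := S5Aux.pow_entry_nonneg hA1nn _ _ _
    calc lam ^ (n - c5) / (K1*K2)
        ≤ (lam^(k*(2*D1+1))/K1) * (lam^(j-D2)/K2) := by
          rw [div_mul_div_comm, ← pow_add]
          have hexp : n - c5 ≤ k*(2*D1+1) + (j - D2) := by omega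
          have hpow : lam ^ (n - c5) ≤ lam ^ (k*(2*D1+1) + (j-D2)) :=
            pow_le_pow_right₀ hlam.le hexp
          exact (div_le_div_iff_of_pos_right (mul_pos hK1pos hK2pos)).mpr hpow
    _ ≤ ((A1^(f (k*(2*D1+1)))) uu uu) * (lam^(j-D2)/K2) :=
          mul_le_mul_of_nonneg_right (hf3 _)
            (div_nonneg (pow_nonneg hlam0.le _) hK2pos.le)
    _ ≤ ((A1^(f (k*(2*D1+1)))) uu uu) * ∑ y : V, ((Qm*A*Qm)^a * ((Qm*A*Qc) * (A^b * A^j))) u y := by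
          refine mul_le_mul_of_nonneg_left ?_ hA1fknn
          exact le_trans hS0 (le_trans hS1 (le_trans hS2 hS3))
    _ ≤ ∑ y : V, ((Qm*A*Qm)^(f (k*(2*D1+1))) * ((Qm*A*Qm)^a * ((Qm*A*Qc) * (A^b * A^j)))) u y := hS4
    _ ≤ F (T k) := hS5
  -- summing the lower bounds
  have hlow : (m:ℝ) * (lam^(n-c5)/(K1*K2)) ≤ ∑ y : V, (A^n) u y := by
    have h1 : (m:ℝ) * (lam^(n-c5)/(K1*K2)) = ∑ _k ∈ Finset.range m, (lam^(n-c5)/(K1*K2)) := by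
      rw [Finset.sum_const, Finset.card_range, nsmul_eq_mul]
    rw [h1]
    have h2 : ∑ k ∈ Finset.range m, (lam^(n-c5)/(K1*K2)) ≤ ∑ k ∈ Finset.range m, F (T k) :=
      Finset.sum_le_sum fun k hk => hFbound k (Finset.mem_range.mp hk)
    have h3 : ∑ k ∈ Finset.range m, F (T k) = ∑ t ∈ (Finset.range m).image T, F t :=
      (Finset.sum_image (fun a _ b _ hab => hTmono.injective hab)).symm
    have h4 : (Finset.range m).image T ⊆ Finset.range n := by
      intro t ht
      obtain ⟨k, hk, rfl⟩ := Finset.mem_image.mp ht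
      have h5 := hTbound k (Finset.mem_range.mp hk)
      exact Finset.mem_range.mpr (by omega)
    have h5 : ∑ t ∈ (Finset.range m).image T, F t ≤ ∑ t ∈ Finset.range n, F t :=
      Finset.sum_le_sum_of_subset_of_nonneg h4 (fun t _ _ => hFnn t)
    exact le_trans h2 (le_trans (le_of_eq h3) (le_trans h5 hrowid))
  have hstar : ∑ y : V, (A^n) u y ≤ ∑ y : V, (A^(e0+n)) star y := by
    calc ∑ y : V, (A^n) u y = 1 * ∑ y : V, (A^n) u y := (one_mul _).symm
    _ ≤ (A^e0) star u * ∑ y : V, (A^n) u y :=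
        mul_le_mul_of_nonneg_right he0
          (Finset.sum_nonneg fun y _ => S5Aux.pow_entry_nonneg hAnn n u y)
    _ ≤ ∑ y : V, (A^e0 * A^n) star y :=
        S5Aux.le_sum_mul_apply (S5Aux.pow_entry_nonneg hAnn e0)
          (S5Aux.pow_entry_nonneg hAnn n) star u
    _ = ∑ y : V, (A^(e0+n)) star y := by rw [← pow_add]
  have hcard := S5Aux.card_walks_from E star (e0+n)
  rw [← hA] at hcard
  have hcnt := hcount (e0+n) (by omega)
  rw [hcard] at hcnt
  have hchain : (m:ℝ) * (lam^(n-c5)/(K1*K2)) ≤ C * lam^(e0+n) :=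
    le_trans hlow (le_trans hstar hcnt)
  have hnc5 : c5 ≤ n := by
    have h1 : 1*(2*D1+1) ≤ m*(2*D1+1) := Nat.mul_le_mul_right _ hm1
    omega
  have hsplitpow : lam^(e0+n) = lam^(n-c5) * lam^(e0+c5) := by
    rw [← pow_add]
    congr 1
    omega
  have hpowpos : (0:ℝ) < lam^(n-c5) := pow_pos hlam0 _
  have hfinal : (m:ℝ) ≤ C * K1 * K2 * lam^(e0+c5) := by
    rw [hsplitpow] at hchain
    have h6 : (m:ℝ) * lam^(n-c5) ≤ (C * K1 * K2 * lam^(e0+c5)) * lam^(n-c5) := by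
      calc (m:ℝ) * lam^(n-c5) = (↑m * (lam^(n-c5)/(K1*K2))) * (K1*K2) := by
            field_simp
      _ ≤ (C * (lam^(n-c5) * lam^(e0+c5))) * (K1*K2) :=
            mul_le_mul_of_nonneg_right hchain (le_of_lt (mul_pos hK1pos hK2pos))
      _ = (C * K1 * K2 * lam^(e0+c5)) * lam^(n-c5) := by ring
    exact le_of_mul_le_mul_right h6 hpowpos
  linarith [hm, hfinal]

end Paper
end
end

section
/- Let 𝒢 be a finite directed graph and λ > 1 such that every strongly connected component of 𝒢 has adjacency matrix of spectral radius strictly less than λ. Then there exists ε > 0 such that the total number of directed paths of length n in 𝒢 is O((λ − ε)ⁿ) as n → ∞. -/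
open scoped Classical BigOperators ENNReal
open MeasureTheory

noncomputable section

namespace Paper

/-! ### Word metric and hyperbolicity -/

variable {G : Type*} [Group G]

section Statement6Aux

variable {V : Type*} [Fintype V]

private theorem card_pathsFrom (E : Set (V × V)) : ∀ (n : ℕ) (u : V),
    (Fintype.card {x : Fin (n + 1) → V //
      (∀ i : Fin n, (x i.castSucc, x i.succ) ∈ E) ∧ x 0 = u} : ℝ)
      = ∑ v, ((adjMatrix V E) ^ n) u v := by
  intro n
  induction n with
  | zero =>
    intro u
    have h1 : Fintype.card {x : Fin 1 → V //
        (∀ i : Fin 0, (x i.castSucc, x i.succ) ∈ E) ∧ x 0 = u} = 1 := by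
      rw [Fintype.card_eq_one_iff]
      refine ⟨⟨fun _ => u, fun i => i.elim0, rfl⟩, ?_⟩
      rintro ⟨x, hx, hx0⟩
      ext i
      have : i = 0 := Subsingleton.elim _ _
      simp [this, hx0]
    rw [h1, pow_zero]
    simp [Matrix.one_apply]
  | succ n ih =>
    intro u
    rw [Fintype.card_subtype]
    rw [Finset.card_eq_sum_card_fiberwise
      (f := fun x : Fin (n + 2) → V => x 1) (t := Finset.univ)
      (fun x _ => Finset.mem_univ _)]
    push_cast
    rw [pow_succ']
    have key : ∀ v : V,
        ((Finset.filter (fun x : Fin (n + 2) → V =>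
            ((∀ i : Fin (n + 1), (x i.castSucc, x i.succ) ∈ E) ∧ x 0 = u)) Finset.univ).filter
            (fun x => x 1 = v)).card
          = if (u, v) ∈ E then
              Fintype.card {y : Fin (n + 1) → V //
                (∀ i : Fin n, (y i.castSucc, y i.succ) ∈ E) ∧ y 0 = v} else 0 := by
      intro v
      by_cases he : (u, v) ∈ E
      · rw [if_pos he, Fintype.card_subtype]
        apply Finset.card_nbij' (fun x => Fin.tail x) (fun y => Fin.cons u y)
        · intro x hx
          simp only [Finset.mem_coe, Finset.mem_filter, Finset.mem_univ, true_and] at hx ⊢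
          obtain ⟨⟨hE, h0⟩, h1⟩ := hx
          constructor
          · intro i
            have := hE i.succ
            exact this
          · show x (0 : Fin (n+1)).succ = v
            simpa using h1
        · intro y hy
          simp only [Finset.mem_coe, Finset.mem_filter, Finset.mem_univ, true_and] at hy ⊢
          obtain ⟨hE, h0⟩ := hy
          refine ⟨⟨?_, by simp⟩, ?_⟩
          · intro i
            induction i using Fin.cases with
            | zero => simpa [Fin.succ_castSucc, h0] using he
            | succ j =>
              have := hE j
              exact this
          · rw [show (1 : Fin (n+2)) = (0 : Fin (n+1)).succ by ext; simp]
            rw [Fin.cons_succ]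
            exact h0
        · intro x hx
          simp only [Finset.mem_coe, Finset.mem_filter, Finset.mem_univ, true_and] at hx
          rw [← hx.1.2]
          exact Fin.cons_self_tail x
        · intro y _
          exact Fin.tail_cons (α := fun _ : Fin (n+2) => V) u y
      · rw [if_neg he]
        rw [Finset.card_eq_zero, Finset.filter_eq_empty_iff]
        rintro x hx
        simp only [Finset.mem_filter, Finset.mem_univ, true_and] at hx
        obtain ⟨hE, h0⟩ := hx
        intro h1
        apply he
        have := hE 0
        simpa [h0, h1] using this
    calc (∑ v : V, (((Finset.filter (fun x : Fin (n + 2) → V =>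
            ((∀ i : Fin (n + 1), (x i.castSucc, x i.succ) ∈ E) ∧ x 0 = u)) Finset.univ).filter
            (fun x => x 1 = v)).card : ℝ))
        = ∑ v : V, (adjMatrix V E u v) *
            (Fintype.card {y : Fin (n + 1) → V //
              (∀ i : Fin n, (y i.castSucc, y i.succ) ∈ E) ∧ y 0 = v} : ℝ) := by
          refine Finset.sum_congr rfl fun v _ => ?_
          rw [key v, adjMatrix]
          by_cases he : (u, v) ∈ E <;> simp [he]
      _ = ∑ v : V, (adjMatrix V E u v) * ∑ w, ((adjMatrix V E) ^ n) v w := by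
          refine Finset.sum_congr rfl fun v _ => by rw [ih v]
      _ = ∑ w, ((adjMatrix V E) * (adjMatrix V E) ^ n) u w := by
          simp_rw [Finset.mul_sum]
          rw [Finset.sum_comm]
          simp [Matrix.mul_apply]

private theorem spec_to_comp (E : Set (V × V)) (μ : ℂ)
    (hμ : μ ∈ spectrum ℂ ((adjMatrix V E).map Complex.ofReal)) :
    ∃ u : V, μ ∈ spectrum ℂ ((restrict (adjMatrix V E) (SCC E u)).map Complex.ofReal) := by
  set Aℂ := (adjMatrix V E).map Complex.ofReal with hAC
  rw [spectrum.mem_iff] at hμ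
  have hdet : (algebraMap ℂ (Matrix V V ℂ) μ - Aℂ).det = 0 := by
    by_contra h
    exact hμ ((Matrix.isUnit_iff_isUnit_det _).2 (isUnit_iff_ne_zero.2 h))
  obtain ⟨v, hv0, hv⟩ := (Matrix.exists_mulVec_eq_zero_iff).2 hdet
  have heig : Aℂ.mulVec v = μ • v := by
    have h1 : (algebraMap ℂ (Matrix V V ℂ) μ - Aℂ).mulVec v
        = μ • v - Aℂ.mulVec v := by
      rw [Matrix.sub_mulVec, Algebra.algebraMap_eq_smul_one, Matrix.smul_mulVec,
        Matrix.one_mulVec]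
    rw [h1] at hv
    linear_combination (norm := module) -hv
  have hsupp : (Finset.univ.filter fun u : V => v u ≠ 0).Nonempty := by
    obtain ⟨u, hu⟩ := Function.ne_iff.1 hv0
    exact ⟨u, by simpa using hu⟩
  obtain ⟨u, hu, hmin⟩ := Finset.exists_min_image _
    (fun u : V => (Set.toFinset {w | Reach E u w}).card) hsupp
  simp only [Finset.mem_filter, Finset.mem_univ, true_and] at hu
  have hforward : ∀ j, v j ≠ 0 → Reach E u j → Reach E j u := by
    intro j hj huj
    by_contra hju
    have hsub : {w | Reach E j w} ⊆ {w | Reach E u w} :=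
      fun w hw => huj.trans hw
    have hss : Set.toFinset {w | Reach E j w} ⊂ Set.toFinset {w | Reach E u w} := by
      rw [Set.toFinset_ssubset_toFinset]
      refine ⟨hsub, fun h => hju (h Relation.ReflTransGen.refl)⟩
    have := Finset.card_lt_card hss
    have := hmin j (by simpa using hj)
    omega
  refine ⟨u, ?_⟩
  set s := SCC E u with hs
  have hus : u ∈ s := ⟨Relation.ReflTransGen.refl, Relation.ReflTransGen.refl⟩
  set B := (restrict (adjMatrix V E) s).map Complex.ofReal with hB
  set w : s → ℂ := fun i => v i.1 with hw
  have hw0 : w ≠ 0 := by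
    intro h
    exact hu (by simpa [hw] using congrFun h ⟨u, hus⟩)
  have hkey : B.mulVec w = μ • w := by
    funext i
    have hout : ∀ j : V, j ∉ s → Aℂ i.1 j * v j = 0 := by
      intro j hj
      by_cases hedge : (i.1, j) ∈ E
      · by_cases hvj : v j = 0
        · rw [hvj, mul_zero]
        · exfalso
          apply hj
          have hreach : Reach E u j := i.2.1.trans (Relation.ReflTransGen.single hedge)
          exact ⟨hreach, hforward j hvj hreach⟩
      · simp [hAC, adjMatrix, Matrix.map_apply, hedge]
    have h2 : (μ • v) i.1 = ∑ j : V, Aℂ i.1 j * v j := by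
      rw [← heig]; rfl
    have h3 : ∑ j : V, Aℂ i.1 j * v j = ∑ j : s, Aℂ i.1 j.1 * v j.1 := by
      rw [← Finset.sum_subtype (Set.toFinset s) (fun x => Set.mem_toFinset)
        (fun j => Aℂ i.1 j * v j)]
      exact (Finset.sum_subset (Finset.subset_univ _)
        (fun j _ hj => hout j (by simpa using hj))).symm
    show ∑ j : s, B i j * w j = μ * w i
    calc ∑ j : s, B i j * w j = ∑ j : s, Aℂ i.1 j.1 * v j.1 := rfl
      _ = (μ • v) i.1 := by rw [h2, h3]
      _ = μ * w i := rfl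
  rw [spectrum.mem_iff]
  intro hunit
  have hker : (algebraMap ℂ (Matrix s s ℂ) μ - B).mulVec w = 0 := by
    rw [Matrix.sub_mulVec, Algebra.algebraMap_eq_smul_one, Matrix.smul_mulVec,
      Matrix.one_mulVec, hkey, sub_self]
  have hdet2 : (algebraMap ℂ (Matrix s s ℂ) μ - B).det = 0 :=
    Matrix.exists_mulVec_eq_zero_iff.1 ⟨w, hw0, hker⟩
  exact ((Matrix.isUnit_iff_isUnit_det _).1 hunit).ne_zero hdet2

end Statement6Aux

/-- Let `𝒢` be a finite directed graph all of whose strongly connected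
components have adjacency matrix of spectral radius strictly less than `λ > 1`. Then
there is `ε > 0` such that the total number of directed paths of length `n` in `𝒢` is
`O((λ − ε)ⁿ)`. -/
theorem statement6 {V : Type*} [Fintype V] (E : Set (V × V))
    (lam : ℝ) (hlam : 1 < lam)
    (hcomp : ∀ u : V, specRad (restrict (adjMatrix V E) (SCC E u)) < ENNReal.ofReal lam) :
    ∃ ε : ℝ, 0 < ε ∧ ∃ K : ℝ, 0 < K ∧ ∀ n : ℕ,
      (Nat.card {x : Fin (n + 1) → V //
          ∀ i : Fin n, (x i.castSucc, x i.succ) ∈ E} : ℝ) ≤ K * (lam - ε) ^ n := by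
  classical
  letI : NormedRing (Matrix V V ℂ) := Matrix.linftyOpNormedRing
  letI : NormedAlgebra ℂ (Matrix V V ℂ) := Matrix.linftyOpNormedAlgebra
  haveI : CompleteSpace (Matrix V V ℂ) := FiniteDimensional.complete ℂ _
  set A := adjMatrix V E with hA
  set Aℂ := A.map Complex.ofReal with hAC
  have hρlt : spectralRadius ℂ Aℂ < ENNReal.ofReal lam := by
    have hle : spectralRadius ℂ Aℂ ≤
        Finset.univ.sup fun u : V => specRad (restrict A (SCC E u)) := by
      refine iSup₂_le fun μ hμ => ?_
      obtain ⟨u, hu⟩ := spec_to_comp E μ hμ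
      refine le_trans ?_ (Finset.le_sup (Finset.mem_univ u))
      exact le_iSup₂ (f := fun k (_ : k ∈ spectrum ℂ
        ((restrict A (SCC E u)).map Complex.ofReal)) => (‖k‖₊ : ℝ≥0∞)) μ hu
    refine lt_of_le_of_lt hle ?_
    rw [Finset.sup_lt_iff
      (show (⊥ : ℝ≥0∞) < ENNReal.ofReal lam from ENNReal.ofReal_pos.2 (by linarith))]
    exact fun u _ => hcomp u
  have hne : spectralRadius ℂ Aℂ ≠ ⊤ := (hρlt.trans ENNReal.ofReal_lt_top).ne
  set r := (spectralRadius ℂ Aℂ).toReal with hr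
  have hr0 : 0 ≤ r := ENNReal.toReal_nonneg
  have hrlam : r < lam := by
    rw [← ENNReal.ofReal_toReal hne] at hρlt
    exact lt_of_not_ge fun h =>
      absurd hρlt (not_lt.2 (ENNReal.ofReal_le_ofReal h))
  refine ⟨(lam - r) / 2, by linarith, ?_⟩
  set c := lam - (lam - r) / 2 with hc
  have hc0 : 0 < c := by rw [hc]; linarith
  have hrc : spectralRadius ℂ Aℂ < ENNReal.ofReal c := by
    rw [ENNReal.lt_ofReal_iff_toReal_lt hne, ← hr, hc]
    linarith
  have htend := spectrum.pow_nnnorm_pow_one_div_tendsto_nhds_spectralRadius Aℂ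
  have hev := htend.eventually_lt_const hrc
  obtain ⟨n₀, hn₀⟩ := Filter.eventually_atTop.1 hev
  set N := max n₀ 1 with hN
  have hnorm : ∀ n, N ≤ n → ‖Aℂ ^ n‖ ≤ c ^ n := by
    intro n hn
    have hn1 : 1 ≤ n := le_trans (le_max_right _ _) hn
    have h2 := hn₀ n (le_trans (le_max_left _ _) hn)
    have h3 : ((‖Aℂ ^ n‖₊ : ℝ≥0∞) ^ (1 / (n : ℝ))) ^ (n : ℝ)
        ≤ (ENNReal.ofReal c) ^ (n : ℝ) :=
      ENNReal.rpow_le_rpow h2.le (by positivity)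
    have hx : (‖Aℂ ^ n‖₊ : ℝ≥0∞) ≤ (ENNReal.ofReal c) ^ (n : ℝ) := by
      rwa [← ENNReal.rpow_mul, one_div, inv_mul_cancel₀
        (show (n : ℝ) ≠ 0 by exact_mod_cast Nat.one_le_iff_ne_zero.1 hn1),
        ENNReal.rpow_one] at h3
    rw [ENNReal.rpow_natCast, ← ENNReal.ofReal_pow hc0.le,
      ← ENNReal.ofReal_coe_nnreal, coe_nnnorm] at hx
    exact (ENNReal.ofReal_le_ofReal_iff (by positivity)).1 hx
  have hnorm' : ∀ n, N ≤ n → ‖Aℂ ^ n‖ ≤ c ^ n := hnorm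
  have hcount : ∀ n : ℕ, (Nat.card {x : Fin (n + 1) → V //
      ∀ i : Fin n, (x i.castSucc, x i.succ) ∈ E} : ℝ) = ∑ u, ∑ v, (A ^ n) u v := by
    intro n
    rw [Nat.card_eq_fintype_card, Fintype.card_subtype]
    rw [Finset.card_eq_sum_card_fiberwise
      (f := fun x : Fin (n + 1) → V => x 0) (t := Finset.univ)
      (fun x _ => Finset.mem_univ _)]
    push_cast
    refine Finset.sum_congr rfl fun u _ => ?_
    rw [← card_pathsFrom E n u, Fintype.card_subtype, Finset.filter_filter]
  have hentry : ∀ (M : Matrix V V ℂ) (u v : V), ‖M u v‖ ≤ ‖M‖ := by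
    intro M u v
    have h1 : ‖M u v‖₊ ≤ ‖M‖₊ := by
      rw [Matrix.linfty_opNNNorm_def]
      exact le_trans
        (Finset.single_le_sum (f := fun j => ‖M u j‖₊) (fun _ _ => zero_le)
          (Finset.mem_univ v))
        (Finset.le_sup (f := fun i => ∑ j : V, ‖M i j‖₊) (Finset.mem_univ u))
    exact_mod_cast h1
  have hmap : ∀ n : ℕ, Aℂ ^ n = (A ^ n).map Complex.ofReal := by
    intro n
    have : Aℂ = Complex.ofRealHom.mapMatrix A := rfl
    rw [this, ← map_pow]
    rfl
  have hsum_le : ∀ n : ℕ, (∑ u, ∑ v, (A ^ n) u v)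
      ≤ ((Fintype.card V : ℝ)) ^ 2 * ‖Aℂ ^ n‖ := by
    intro n
    calc ∑ u, ∑ v, (A ^ n) u v ≤ ∑ u : V, ∑ v : V, ‖(Aℂ ^ n) u v‖ := by
          refine Finset.sum_le_sum fun u _ => Finset.sum_le_sum fun v _ => ?_
          rw [hmap n]
          calc (A ^ n) u v ≤ |(A ^ n) u v| := le_abs_self _
            _ = ‖((A ^ n).map Complex.ofReal) u v‖ := by
                rw [Matrix.map_apply, Complex.norm_real, Real.norm_eq_abs]
      _ ≤ ∑ _u : V, ∑ _v : V, ‖Aℂ ^ n‖ := by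
          exact Finset.sum_le_sum fun u _ => Finset.sum_le_sum fun v _ => hentry _ u v
      _ = ((Fintype.card V : ℝ)) ^ 2 * ‖Aℂ ^ n‖ := by
          simp [Finset.sum_const, sq]
          ring
  set S := ∑ m ∈ Finset.range N, (Nat.card {x : Fin (m + 1) → V //
      ∀ i : Fin m, (x i.castSucc, x i.succ) ∈ E} : ℝ) * c⁻¹ ^ m with hS
  have hS0 : 0 ≤ S := by
    refine Finset.sum_nonneg fun m _ => ?_
    positivity
  refine ⟨S + ((Fintype.card V : ℝ)) ^ 2 + 1, by positivity, ?_⟩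
  intro n
  have hcard2 : (0 : ℝ) ≤ ((Fintype.card V : ℝ)) ^ 2 := by positivity
  by_cases hcase : N ≤ n
  · rw [hcount n]
    calc ∑ u, ∑ v, (A ^ n) u v ≤ ((Fintype.card V : ℝ)) ^ 2 * ‖Aℂ ^ n‖ := hsum_le n
      _ ≤ ((Fintype.card V : ℝ)) ^ 2 * c ^ n :=
          mul_le_mul_of_nonneg_left (hnorm n hcase) hcard2
      _ ≤ (S + ((Fintype.card V : ℝ)) ^ 2 + 1) * c ^ n := by
          refine mul_le_mul_of_nonneg_right (by linarith) (by positivity)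
  · push_neg at hcase
    have h1 : (Nat.card {x : Fin (n + 1) → V //
        ∀ i : Fin n, (x i.castSucc, x i.succ) ∈ E} : ℝ) * c⁻¹ ^ n ≤ S := by
      rw [hS]
      refine Finset.single_le_sum (f := fun m => (Nat.card {x : Fin (m + 1) → V //
        ∀ i : Fin m, (x i.castSucc, x i.succ) ∈ E} : ℝ) * c⁻¹ ^ m)
        (fun m _ => by positivity) (Finset.mem_range.2 hcase)
    have h2 : (Nat.card {x : Fin (n + 1) → V //
        ∀ i : Fin n, (x i.castSucc, x i.succ) ∈ E} : ℝ)
        = ((Nat.card {x : Fin (n + 1) → V //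
          ∀ i : Fin n, (x i.castSucc, x i.succ) ∈ E} : ℝ) * c⁻¹ ^ n) * c ^ n := by
      rw [mul_assoc, ← mul_pow, inv_mul_cancel₀ hc0.ne', one_pow, mul_one]
    rw [h2]
    refine mul_le_mul_of_nonneg_right (le_trans h1 (by linarith)) (by positivity)
end Paper
end
end

section
/- Let B be an irreducible 0–1 square matrix with period p, with edge set E = {(u,v) : B(u,v) = 1} and vertex set V, and let f : E → ℤ^ν. Suppose that for every t ∈ ℝ^ν with t ∉ ℤ^ν, the function (u,v) ↦ ⟨t, f(u,v)⟩ on E is not cohomologous to a constant. Then the quotient group Γ_f/Δ_f is finite. -/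
open scoped Classical BigOperators ENNReal
open MeasureTheory

noncomputable section

namespace Paper

/-! ### Word metric and hyperbolicity -/

variable {G : Type*} [Group G]

section Aux

variable {V : Type*} {E : Set (V × V)}

/-- auxiliary: being a path. -/
def IsPath (E : Set (V × V)) (k : ℕ) (x : ℕ → V) : Prop :=
  ∀ i, i < k → (x i, x (i + 1)) ∈ E

/-- auxiliary: weighted sum along a walk. -/
def wSum {M : Type*} [AddCommMonoid M] (g : V × V → M) (k : ℕ) (x : ℕ → V) : M :=
  ∑ i ∈ Finset.range k, g (x i, x (i + 1))

/-- auxiliary: concatenation of walks. -/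
def cat (k : ℕ) (x y : ℕ → V) : ℕ → V := fun i => if i < k then x i else y (i - k)

lemma cat_apply_of_lt {k i : ℕ} (h : i < k) (x y : ℕ → V) : cat k x y i = x i := if_pos h

lemma cat_apply_of_le {k i : ℕ} (h : k ≤ i) (x y : ℕ → V) : cat k x y i = y (i - k) :=
  if_neg (by omega)

lemma cat_succ_eq {k : ℕ} {x y : ℕ → V} (hxy : x k = y 0) {i : ℕ} (h : i < k) :
    cat k x y (i + 1) = x (i + 1) := by
  by_cases h' : i + 1 < k
  · exact cat_apply_of_lt h' x y
  · have hk : i + 1 = k := by omega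
    rw [cat_apply_of_le (by omega) x y]
    have h0 : i + 1 - k = 0 := by omega
    rw [h0, ← hxy, hk]

lemma isPath_cat {k l : ℕ} {x y : ℕ → V} (hx : IsPath E k x) (hy : IsPath E l y)
    (hxy : x k = y 0) : IsPath E (k + l) (cat k x y) := by
  intro i hi
  by_cases h : i < k
  · rw [cat_apply_of_lt h, cat_succ_eq hxy h]; exact hx i h
  · push_neg at h
    rw [cat_apply_of_le h, cat_apply_of_le (by omega)]
    have : i + 1 - k = (i - k) + 1 := by omega
    rw [this]
    exact hy _ (by omega)

lemma wSum_cat {M : Type*} [AddCommMonoid M] (g : V × V → M) {k l : ℕ} {x y : ℕ → V}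
    (hxy : x k = y 0) :
    wSum g (k + l) (cat k x y) = wSum g k x + wSum g l y := by
  unfold wSum
  rw [Finset.sum_range_add]
  congr 1
  · apply Finset.sum_congr rfl
    intro i hi
    rw [Finset.mem_range] at hi
    rw [cat_apply_of_lt hi, cat_succ_eq hxy hi]
  · apply Finset.sum_congr rfl
    intro i hi
    rw [cat_apply_of_le (Nat.le_add_right _ _), cat_apply_of_le (by omega)]
    have e1 : k + i - k = i := by omega
    have e2 : k + i + 1 - k = i + 1 := by omega
    rw [e1, e2]

lemma exists_path_of_transGen {u v : V}
    (h : Relation.TransGen (fun a b => (a, b) ∈ E) u v) :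
    ∃ k x, 0 < k ∧ x 0 = u ∧ x k = v ∧ IsPath E k x := by
  induction h with
  | single hb =>
    rename_i b
    refine ⟨1, fun i => if i = 0 then u else b, one_pos, by simp, by simp, ?_⟩
    intro i hi
    interval_cases i
    simpa using hb
  | tail _ hbc ih =>
    rename_i b c _
    obtain ⟨k, x, hk, hx0, hxk, hx⟩ := ih
    have hedge : IsPath E 1 (fun i => if i = 0 then b else c) := by
      intro i hi; interval_cases i; simpa using hbc
    refine ⟨k + 1, cat k x (fun i => if i = 0 then b else c), by omega, ?_, ?_, ?_⟩
    · rw [cat_apply_of_lt hk]; exact hx0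
    · rw [cat_apply_of_le (by omega)]; simp
    · exact isPath_cat hx hedge (by simpa using hxk)

lemma exists_rep {M : Type*} [AddCommMonoid M] (g : V × V → M) {k : ℕ} {x : ℕ → V}
    (hx : IsPath E k x) (hxx : x 0 = x k) (m : ℕ) :
    ∃ z, z 0 = x 0 ∧ z (m * k) = x 0 ∧ IsPath E (m * k) z ∧
      wSum g (m * k) z = m • wSum g k x := by
  induction m with
  | zero => exact ⟨fun _ => x 0, rfl, by simp, fun i hi => by omega, by simp [wSum]⟩
  | succ m ih =>
    obtain ⟨z, hz0, hzm, hz, hzs⟩ := ih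
    refine ⟨cat (m * k) z x, ?_, ?_, ?_, ?_⟩
    · by_cases h : 0 < m * k
      · rw [cat_apply_of_lt h]; exact hz0
      · rw [cat_apply_of_le (by omega)]; simp [Nat.eq_zero_of_not_pos h]
    · have : (m + 1) * k = m * k + k := by ring
      rw [this, cat_apply_of_le (by omega)]
      simp [hxx.symm]
    · have : (m + 1) * k = m * k + k := by ring
      rw [this]
      exact isPath_cat hz hx (by rw [hzm, hxx])
    · have h1 : (m + 1) * k = m * k + k := by ring
      rw [h1, wSum_cat g (by rw [hzm, hxx]), hzs, succ_nsmul]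


lemma coboundary (E : Set (V × V))
    (hirr : ∀ u v : V, Relation.TransGen (fun a b => (a, b) ∈ E) u v)
    (v₀ : V) (g : V × V → ℝ) (c : ℝ)
    (hcyc : ∀ k x, 0 < k → x 0 = x k → IsPath E k x → wSum g k x = c * k) :
    ∃ h : V → ℝ, ∀ u v : V, (u, v) ∈ E → g (u, v) = c + h v - h u := by
  choose k x hk hx0 hxk hx using fun v => exists_path_of_transGen (hirr v₀ v)
  choose l y hl hy0 hyl hy using fun v => exists_path_of_transGen (hirr v v₀)
  refine ⟨fun v => wSum g (k v) (x v) - c * (k v), ?_⟩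
  intro u v huv
  have hsmall : wSum g (k v) (x v) + wSum g (l v) (y v) = c * ((k v : ℝ) + (l v : ℝ)) := by
    have h0 : cat (k v) (x v) (y v) 0 = v₀ := by rw [cat_apply_of_lt (hk v), hx0]
    have hee : cat (k v) (x v) (y v) (k v + l v) = v₀ := by
      rw [cat_apply_of_le (by omega)]
      have e : k v + l v - k v = l v := by omega
      rw [e, hyl]
    have hc := hcyc (k v + l v) (cat (k v) (x v) (y v)) (by have := hk v; omega)
      (by rw [h0, hee]) (isPath_cat (hx v) (hy v) (by rw [hxk, hy0]))
    rw [wSum_cat g (by rw [hxk, hy0])] at hc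
    rw [hc]; push_cast; ring
  set e : ℕ → V := fun i => if i = 0 then u else v with he
  have hep : IsPath E 1 e := by
    intro i hi; interval_cases i; simpa [he] using huv
  have hj1 : x u (k u) = (cat 1 e (y v)) 0 := by
    rw [cat_apply_of_lt one_pos, hxk]; simp [he]
  have hj2 : e 1 = y v 0 := by simp [he, hy0]
  have hbig : wSum g (k u) (x u) + (g (u, v) + wSum g (l v) (y v))
      = c * ((k u : ℝ) + 1 + (l v : ℝ)) := by
    have h0 : cat (k u) (x u) (cat 1 e (y v)) 0 = v₀ := by
      rw [cat_apply_of_lt (hk u), hx0]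
    have hee : cat (k u) (x u) (cat 1 e (y v)) (k u + (1 + l v)) = v₀ := by
      rw [cat_apply_of_le (by omega)]
      have e1 : k u + (1 + l v) - k u = 1 + l v := by omega
      rw [e1, cat_apply_of_le (by omega)]
      have e2 : 1 + l v - 1 = l v := by omega
      rw [e2, hyl]
    have hc := hcyc (k u + (1 + l v)) (cat (k u) (x u) (cat 1 e (y v)))
      (by have := hk u; omega) (by rw [h0, hee])
      (isPath_cat (hx u) (isPath_cat hep (hy v) hj2) hj1)
    rw [wSum_cat g hj1, wSum_cat g hj2] at hc
    have hw1 : wSum g 1 e = g (u, v) := by simp [wSum, he]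
    rw [hw1] at hc
    rw [hc]; push_cast; ring
  dsimp only
  linarith [hsmall, hbig]

lemma exists_nsmul_mem_span_int {W : Type*} [AddCommGroup W] [Module ℚ W]
    (s : Set W) {x : W} (hx : x ∈ Submodule.span ℚ s) :
    ∃ m : ℕ, 0 < m ∧ ((m : ℕ) : ℚ) • x ∈ Submodule.span ℤ s := by
  induction hx using Submodule.span_induction with
  | mem w hw => exact ⟨1, one_pos, by simpa using Submodule.subset_span hw⟩
  | zero => exact ⟨1, one_pos, by simp⟩
  | add a b _ _ iha ihb =>
    obtain ⟨ma, hma, ha⟩ := iha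
    obtain ⟨mb, hmb, hb⟩ := ihb
    refine ⟨ma * mb, Nat.mul_pos hma hmb, ?_⟩
    have hkey : ((ma * mb : ℕ) : ℚ) • (a + b)
        = ((mb : ℤ)) • (((ma : ℕ) : ℚ) • a) + ((ma : ℤ)) • (((mb : ℕ) : ℚ) • b) := by
      rw [← Int.cast_smul_eq_zsmul ℚ (mb : ℤ), ← Int.cast_smul_eq_zsmul ℚ (ma : ℤ),
        smul_smul, smul_smul, smul_add]
      push_cast
      rw [mul_comm (mb : ℚ) (ma : ℚ)]
    rw [hkey]
    exact Submodule.add_mem _ (Submodule.smul_mem _ _ ha) (Submodule.smul_mem _ _ hb)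
  | smul q a _ ih =>
    obtain ⟨m, hm, hma⟩ := ih
    refine ⟨m * q.den, Nat.mul_pos hm q.den_pos, ?_⟩
    have hq : ((q.den : ℚ)) * q = (q.num : ℚ) := by
      have h := Rat.num_div_den q
      have hd : ((q.den : ℚ)) ≠ 0 := Nat.cast_ne_zero.mpr q.den_pos.ne'
      have h2 : (q.num : ℚ) = q * q.den := (div_eq_iff hd).mp h
      rw [h2]; ring
    have hkey : ((m * q.den : ℕ) : ℚ) • (q • a) = (q.num : ℤ) • (((m : ℕ) : ℚ) • a) := by
      rw [← Int.cast_smul_eq_zsmul ℚ (q.num : ℤ), smul_smul, smul_smul]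
      congr 1
      push_cast
      rw [mul_assoc, hq]
      ring
    rw [hkey]
    exact Submodule.smul_mem _ _ hma


/-- The rational pairing of `t' : ℚ^ν` against `w : ℤ^ν`. -/
def qpair {ν : ℕ} (t' : Fin ν → ℚ) (w : Fin ν → ℤ) : ℚ := ∑ i, (w i : ℚ) * t' i

lemma qpair_sub {ν : ℕ} (t' : Fin ν → ℚ) (a b : Fin ν → ℤ) :
    qpair t' (a - b) = qpair t' a - qpair t' b := by
  unfold qpair
  rw [← Finset.sum_sub_distrib]
  apply Finset.sum_congr rfl
  intro i _
  have : (a - b) i = a i - b i := rfl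
  rw [this]; push_cast; ring

lemma qpair_nsmul {ν : ℕ} (t' : Fin ν → ℚ) (n : ℕ) (a : Fin ν → ℤ) :
    qpair t' (n • a) = (n : ℚ) * qpair t' a := by
  unfold qpair
  rw [Finset.mul_sum]
  apply Finset.sum_congr rfl
  intro i _
  have : (n • a) i = (n : ℤ) * a i := by simp [nsmul_eq_mul]
  rw [this]; push_cast; ring

lemma exists_functional {ν : ℕ} (Δ : AddSubgroup (Fin ν → ℤ)) (w₀ : Fin ν → ℤ)
    (hmn : ∀ m : ℕ, 0 < m → m • w₀ ∉ Δ) :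
    ∃ t' : Fin ν → ℚ, qpair t' w₀ ≠ 0 ∧ ∀ d ∈ Δ, qpair t' d = 0 := by
  classical
  set ι : (Fin ν → ℤ) →+ (Fin ν → ℚ) :=
    { toFun := fun w i => ((w i : ℤ) : ℚ)
      map_zero' := by ext i; simp
      map_add' := by intro a b; ext i; push_cast; simp } with hιdef
  have hιinj : Function.Injective ι := by
    intro a b hab
    funext i
    have h2 : ((a i : ℤ) : ℚ) = ((b i : ℤ) : ℚ) := congrFun hab i
    exact_mod_cast h2
  set Wset : Set (Fin ν → ℚ) := ι '' (Δ : Set (Fin ν → ℤ)) with hWset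
  by_cases hw : ι w₀ ∈ Submodule.span ℚ Wset
  · exfalso
    obtain ⟨m, hm0, hms⟩ := exists_nsmul_mem_span_int Wset hw
    have hset : Wset = ((AddSubgroup.map ι Δ : AddSubgroup (Fin ν → ℚ)) :
        Set (Fin ν → ℚ)) := by rw [AddSubgroup.coe_map]
    rw [hset] at hms
    have hmem : ((m : ℕ) : ℚ) • ι w₀ ∈ AddSubgroup.map ι Δ := by
      have h1 := (Submodule.mem_toAddSubgroup _).mpr hms
      rwa [Submodule.span_int_eq] at h1
    obtain ⟨d, hd, hde⟩ := hmem
    have hcast : ((m : ℕ) : ℚ) • ι w₀ = ι (m • w₀) := by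
      funext i
      have h1 : (m • w₀) i = (m : ℤ) * w₀ i := by simp [nsmul_eq_mul]
      show ((m : ℕ) : ℚ) * ((w₀ i : ℤ) : ℚ) = (((m • w₀) i : ℤ) : ℚ)
      rw [h1]; push_cast; ring
    rw [hcast] at hde
    exact hmn m hm0 ((hιinj hde) ▸ hd)
  · set Wsp : Submodule ℚ (Fin ν → ℚ) := Submodule.span ℚ Wset with hWsp
    have hne : (Submodule.Quotient.mk (ι w₀) : (Fin ν → ℚ) ⧸ Wsp) ≠ 0 :=
      fun h0 => hw ((Submodule.Quotient.mk_eq_zero Wsp).mp h0)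
    have hnall : ¬ ∀ φ' : Module.Dual ℚ ((Fin ν → ℚ) ⧸ Wsp),
        φ' (Submodule.Quotient.mk (ι w₀)) = 0 := by
      rw [Module.forall_dual_apply_eq_zero_iff ℚ]; exact hne
    obtain ⟨φ', hφ'⟩ := not_forall.mp hnall
    set φ : (Fin ν → ℚ) →ₗ[ℚ] ℚ := φ'.comp Wsp.mkQ with hφdef
    have hφ0 : ∀ w ∈ Wsp, φ w = 0 := by
      intro w hw'
      have hz : Wsp.mkQ w = 0 := (Submodule.Quotient.mk_eq_zero Wsp).mpr hw'
      show φ' (Wsp.mkQ w) = 0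
      rw [hz]
      exact map_zero φ'
    have hφw₀ : φ (ι w₀) ≠ 0 := hφ'
    set t' : Fin ν → ℚ := fun i => φ (fun j => if i = j then 1 else 0) with ht'
    have hpair : ∀ w : Fin ν → ℤ, φ (ι w) = qpair t' w := by
      intro w
      rw [LinearMap.pi_apply_eq_sum_univ φ (ι w)]
      unfold qpair
      apply Finset.sum_congr rfl
      intro i _
      show (ι w) i • φ (fun j => if i = j then 1 else 0) = _
      rw [smul_eq_mul]
      rfl
    refine ⟨t', by rw [← hpair]; exact hφw₀, ?_⟩
    intro d hd
    rw [← hpair]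
    exact hφ0 _ (Submodule.subset_span ⟨d, hd, rfl⟩)

lemma rat_div_not_int (q : ℚ) (hq0 : q ≠ 0) (mz : ℤ) :
    q / ((q.num.natAbs + 1 : ℕ) : ℚ) ≠ (mz : ℚ) := by
  intro hmz
  set N : ℕ := q.num.natAbs + 1 with hNdef
  have hN : 0 < N := Nat.succ_pos _
  have hNQ : ((N : ℕ) : ℚ) ≠ 0 := Nat.cast_ne_zero.mpr hN.ne'
  have hqm : q = (mz : ℚ) * N := by
    field_simp at hmz
    linarith [hmz]
  have hm0 : mz ≠ 0 := by
    rintro rfl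
    simp at hqm
    exact hq0 hqm
  have h1 : (1 : ℚ) ≤ |(mz : ℚ)| := by
    rw [← Int.cast_abs]
    exact_mod_cast Int.one_le_abs (by exact_mod_cast hm0)
  have hd : ((q.den : ℚ)) ≠ 0 := Nat.cast_ne_zero.mpr q.den_pos.ne'
  have habs1 : |q| ≤ |(q.num : ℚ)| := by
    have h := Rat.num_div_den q
    have h2 : |q| * q.den = |(q.num : ℚ)| := by
      rw [← abs_of_pos (show (0:ℚ) < q.den by exact_mod_cast q.den_pos), ← abs_mul]
      congr 1
      exact ((div_eq_iff hd).mp h).symm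
    have hden1 : (1 : ℚ) ≤ q.den := by exact_mod_cast q.den_pos
    nlinarith [abs_nonneg q]
  have habs2 : (N : ℚ) ≤ |q| := by
    have hNa : |((N : ℕ) : ℚ)| = (N : ℚ) := abs_of_pos (by exact_mod_cast hN)
    calc ((N : ℕ) : ℚ) = 1 * ((N : ℕ) : ℚ) := (one_mul _).symm
      _ ≤ |(mz : ℚ)| * ((N : ℕ) : ℚ) := by
          apply mul_le_mul_of_nonneg_right h1 (by positivity)
      _ = |(mz : ℚ)| * |((N : ℕ) : ℚ)| := by rw [hNa]
      _ = |q| := by rw [← abs_mul, ← hqm]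
  have hnum : |(q.num : ℚ)| = ((N : ℕ) : ℚ) - 1 := by
    rw [hNdef]
    push_cast [Nat.cast_natAbs]
    ring
  rw [hnum] at habs1
  linarith

lemma wSum_pairing {ν : ℕ} (f : V × V → (Fin ν → ℤ)) (t : Fin ν → ℝ) (k : ℕ) (x : ℕ → V) :
    wSum (fun e => ∑ i, t i * ((f e) i : ℝ)) k x = ∑ j, t j * (((wSum f k x) j : ℤ) : ℝ) := by
  unfold wSum
  rw [Finset.sum_comm]
  apply Finset.sum_congr rfl
  intro j _
  rw [Finset.sum_apply]
  push_cast
  rw [Finset.mul_sum]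

lemma real_pair_eq {ν : ℕ} (t' : Fin ν → ℚ) (N : ℕ) (w : Fin ν → ℤ) :
    (∑ j, ((t' j / N : ℚ) : ℝ) * ((w j : ℤ) : ℝ)) = ((qpair t' w / N : ℚ) : ℝ) := by
  unfold qpair
  push_cast
  rw [Finset.sum_div]
  apply Finset.sum_congr rfl
  intro j _
  ring

lemma finite_quot {ν : ℕ} (Γ Δ : AddSubgroup (Fin ν → ℤ)) (n : ℕ) (hn : 0 < n)
    (hΓΔ : ∀ x ∈ Γ, n • x ∈ Δ) : Finite (Γ ⧸ Δ.addSubgroupOf Γ) := by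
  haveI hfg : AddGroup.FG ↥Γ := by
    rw [AddGroup.fg_iff_addSubgroup_fg]
    have h1 : (AddSubgroup.toIntSubmodule Γ).FG := IsNoetherian.noetherian _
    rwa [Submodule.fg_iff_addSubgroup_fg, AddSubgroup.toIntSubmodule_toAddSubgroup] at h1
  apply AddCommGroup.finite_of_fg_torsion
  intro g
  obtain ⟨a, rfl⟩ := QuotientAddGroup.mk'_surjective _ g
  rw [isOfFinAddOrder_iff_nsmul_eq_zero]
  refine ⟨n, hn, ?_⟩
  rw [← map_nsmul (QuotientAddGroup.mk' (Δ.addSubgroupOf Γ)) n a, QuotientAddGroup.mk'_apply,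
    QuotientAddGroup.eq_zero_iff, AddSubgroup.mem_addSubgroupOf]
  have : ((n • a : ↥Γ) : Fin ν → ℤ) = n • (a : Fin ν → ℤ) := rfl
  rw [this]
  exact hΓΔ (a : Fin ν → ℤ) a.2

end Aux

/-- Let `B` be an irreducible 0–1 matrix of period `p` with edge set
`E` and `f : E → ℤ^ν`. If for every `t ∈ ℝ^ν \ ℤ^ν` the function `(u,v) ↦ ⟨t, f(u,v)⟩`
is not cohomologous to a constant, then the quotient group `Γ_f/Δ_f` is finite. -/
theorem statement10 {V : Type*} [Fintype V] (B : Matrix V V ℝ)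
    (hB01 : ∀ u v, B u v = 0 ∨ B u v = 1)
    (hirr : ∀ u v : V, Relation.TransGen (fun a b => (a, b) ∈ Bedges B) u v)
    (p : ℕ) (hp : IsPeriod (Bedges B) Set.univ p)
    (ν : ℕ) (f : V × V → (Fin ν → ℤ))
    (hcoh : ∀ t : Fin ν → ℝ, (¬ ∀ i, ∃ m : ℤ, t i = (m : ℝ)) →
      ¬ ∃ (c : ℝ) (h : V → ℝ), ∀ u v : V, (u, v) ∈ Bedges B →
        pairing t (f (u, v)) = c + h v - h u) :
    Finite (GammaGroup (Bedges B) Set.univ f ⧸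
      (DeltaGroup (Bedges B) Set.univ f).addSubgroupOf
        (GammaGroup (Bedges B) Set.univ f)) := by
  classical
  set E : Set (V × V) := Bedges B with hE
  clear_value E
  set Γ : AddSubgroup (Fin ν → ℤ) := GammaGroup E Set.univ f with hΓdef
  set Δ : AddSubgroup (Fin ν → ℤ) := DeltaGroup E Set.univ f with hΔdef
  clear_value Γ Δ
  -- Step 1: find n > 0 scaling all cycle weights into Δ.
  have key : ∃ n : ℕ, 0 < n ∧
      ∀ k x, IsCycleIn E Set.univ k x → n • cycleWeight f k x ∈ Δ := by
    by_cases hex : ∃ k x, IsCycleIn E Set.univ k x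
    · obtain ⟨L₀, x₀, hc₀⟩ := hex
      obtain ⟨hL₀, -, hx₀0, hx₀⟩ := hc₀
      -- difference of a cycle and the base cycle, suitably repeated, lies in Δ
      have hdiff : ∀ k x, IsCycleIn E Set.univ k x →
          L₀ • cycleWeight f k x - k • cycleWeight f L₀ x₀ ∈ Δ := by
        intro k x hc
        obtain ⟨hk, -, hx0, hx⟩ := hc
        obtain ⟨z₁, hz10, hz1e, hz1p, hz1s⟩ := exists_rep (E := E) f hx hx0 L₀
        obtain ⟨z₂, hz20, hz2e, hz2p, hz2s⟩ := exists_rep (E := E) f hx₀ hx₀0 k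
        have hmc : k * L₀ = L₀ * k := Nat.mul_comm k L₀
        rw [hmc] at hz2e hz2p hz2s
        rw [hΔdef]
        apply AddSubgroup.subset_closure
        refine ⟨L₀ * k, z₁, z₂, ?_, ?_, ?_⟩
        · exact ⟨Nat.mul_pos hL₀ hk, fun i _ => trivial, by rw [hz10, hz1e],
            fun i hi => hz1p i hi⟩
        · exact ⟨Nat.mul_pos hL₀ hk, fun i _ => trivial, by rw [hz20, hz2e],
            fun i hi => hz2p i hi⟩
        · show L₀ • cycleWeight f k x - k • cycleWeight f L₀ x₀
            = wSum f (L₀ * k) z₁ - wSum f (L₀ * k) z₂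
          rw [hz1s, hz2s]
          rfl
      -- Step 1a: some positive multiple of the base weight lies in Δ
      have hm : ∃ m : ℕ, 0 < m ∧ m • cycleWeight f L₀ x₀ ∈ Δ := by
        by_contra hmn
        push_neg at hmn
        obtain ⟨t', ht'w₀, ht'Δ⟩ := exists_functional Δ (cycleWeight f L₀ x₀) hmn
        have hφcyc : ∀ k x, IsCycleIn E Set.univ k x →
            (L₀ : ℚ) * qpair t' (cycleWeight f k x)
              = (k : ℚ) * qpair t' (cycleWeight f L₀ x₀) := by
          intro k x hc
          have h0 := ht'Δ _ (hdiff k x hc)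
          rw [qpair_sub, qpair_nsmul, qpair_nsmul, sub_eq_zero] at h0
          exact h0
        have hnz : ∃ i₀, t' i₀ ≠ 0 := by
          by_contra hall
          push_neg at hall
          apply ht'w₀
          unfold qpair
          simp [hall]
        obtain ⟨i₀, hi₀⟩ := hnz
        set N : ℕ := (t' i₀).num.natAbs + 1 with hNdef
        have hN : 0 < N := Nat.succ_pos _
        have hNQ : ((N : ℕ) : ℚ) ≠ 0 := Nat.cast_ne_zero.mpr hN.ne'
        set t : Fin ν → ℝ := fun i => ((t' i / N : ℚ) : ℝ) with htdef
        have ht : ¬ ∀ i, ∃ mz : ℤ, t i = (mz : ℝ) := by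
          intro hall
          obtain ⟨mz, hmz⟩ := hall i₀
          apply rat_div_not_int (t' i₀) hi₀ mz
          have h2 : t i₀ = ((mz : ℚ) : ℝ) := by rw [hmz]; push_cast; ring
          have h3 : ((t' i₀ / N : ℚ) : ℝ) = ((mz : ℚ) : ℝ) := h2
          exact_mod_cast h3
        apply hcoh t ht
        set c : ℝ := ((qpair t' (cycleWeight f L₀ x₀) / (L₀ * N) : ℚ) : ℝ) with hcdef
        have hL0Q : ((L₀ : ℕ) : ℚ) ≠ 0 := Nat.cast_ne_zero.mpr hL₀.ne'
        have hcyc : ∀ k x, 0 < k → x 0 = x k → IsPath E k x →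
            wSum (fun e => pairing t (f e)) k x = c * k := by
          intro k x hk0 hx0 hxp
          have hc : IsCycleIn E Set.univ k x := ⟨hk0, fun i _ => trivial, hx0, hxp⟩
          have hsw : wSum (fun e => pairing t (f e)) k x
              = ∑ j, t j * (((cycleWeight f k x) j : ℤ) : ℝ) := wSum_pairing f t k x
          have h2 : (∑ j, t j * (((cycleWeight f k x) j : ℤ) : ℝ))
              = ((qpair t' (cycleWeight f k x) / N : ℚ) : ℝ) :=
            real_pair_eq t' N (cycleWeight f k x)
          rw [hsw, h2]
          have hq := hφcyc k x hc
          have hval : (qpair t' (cycleWeight f k x) / N : ℚ)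
              = (qpair t' (cycleWeight f L₀ x₀) / (L₀ * N)) * k := by
            field_simp
            linear_combination hq
          rw [hval, hcdef]
          push_cast
          ring
        obtain ⟨h, hh⟩ := coboundary E hirr (x₀ 0) (fun e => pairing t (f e)) c hcyc
        exact ⟨c, h, fun u v huv => hh u v huv⟩
      obtain ⟨m, hm0, hmΔ⟩ := hm
      refine ⟨m * L₀, Nat.mul_pos hm0 hL₀, ?_⟩
      intro k x hc
      have hd := hdiff k x hc
      have hmk : k • (m • cycleWeight f L₀ x₀) = m • (k • cycleWeight f L₀ x₀) := by
        rw [smul_smul, smul_smul, Nat.mul_comm]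
      have hsplit : (m * L₀) • cycleWeight f k x
          = m • (L₀ • cycleWeight f k x - k • cycleWeight f L₀ x₀)
            + k • (m • cycleWeight f L₀ x₀) := by
        rw [smul_sub, hmk, sub_add_cancel, smul_smul]
      rw [hsplit]
      exact AddSubgroup.add_mem _ (AddSubgroup.nsmul_mem _ hd m)
        (AddSubgroup.nsmul_mem _ hmΔ k)
    · refine ⟨1, one_pos, ?_⟩
      intro k x hc
      exact absurd ⟨k, x, hc⟩ hex
  obtain ⟨n, hn, hgen⟩ := key
  -- Step 2: n • Γ ⊆ Δ
  have hΓΔ : ∀ x ∈ Γ, n • x ∈ Δ := by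
    intro x hx
    set ψ : (Fin ν → ℤ) →+ (Fin ν → ℤ) :=
      AddMonoidHom.mk' (fun x => n • x) (fun a b => smul_add n a b) with hψ
    have hle : Γ ≤ AddSubgroup.comap ψ Δ := by
      rw [hΓdef]
      apply (AddSubgroup.closure_le _).mpr
      rintro w ⟨k, x', hc, rfl⟩
      exact hgen k x' hc
    exact hle hx
  exact finite_quot Γ Δ n hn hΓΔ

end Paper
end
end

section
/- Let B be an irreducible 0–1 square matrix with period p, with edge set E = {(u,v) : B(u,v) = 1}, and let f : E → ℤ^ν. Then every cycle of B has length a multiple of p, there exist cycles γ, γ′ with l(γ) − l(γ′) = p, and the quotient group Γ_f/Δ_f is cyclic, generated by the coset c + Δ_f where c = w_f(γ) − w_f(γ′) for any two cycles γ, γ′ with l(γ) − l(γ′) = p. -/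
open scoped Classical BigOperators ENNReal
open MeasureTheory

noncomputable section

namespace Paper

/-! ### Word metric and hyperbolicity -/

variable {G : Type*} [Group G]

/-- A directed path with `n` edges from `u` to `v`, recorded by successive vertices. -/
def IsPathIn {V : Type*} (E : Set (V × V)) (n : ℕ) (x : ℕ → V) (u v : V) : Prop :=
  x 0 = u ∧ x n = v ∧ ∀ i < n, (x i, x (i + 1)) ∈ E

lemma path_concat {V : Type*} {ν : ℕ} {E : Set (V × V)} (f : V × V → Fin ν → ℤ)
    {m n : ℕ} {x y : ℕ → V} {u v w : V}
    (hx : IsPathIn E m x u v) (hy : IsPathIn E n y v w) :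
    ∃ z, IsPathIn E (m + n) z u w ∧
      cycleWeight f (m + n) z = cycleWeight f m x + cycleWeight f n y := by
  obtain ⟨hx0, hxm, hxe⟩ := hx
  obtain ⟨hy0, hyn, hye⟩ := hy
  set z : ℕ → V := fun i => if i ≤ m then x i else y (i - m) with hzdef
  have hle : ∀ i, i ≤ m → z i = x i := fun i hi => if_pos hi
  have hge : ∀ j, z (m + j) = y j := by
    intro j
    cases j with
    | zero =>
        have : z m = x m := hle m le_rfl
        simpa [this, hxm] using hy0.symm
    | succ j =>
        have h1 : ¬ m + (j + 1) ≤ m := by omega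
        have h2 : m + (j + 1) - m = j + 1 := by omega
        simp only [hzdef, if_neg h1, h2]
  refine ⟨z, ⟨?_, ?_, ?_⟩, ?_⟩
  · rw [hle 0 (Nat.zero_le m), hx0]
  · rw [hge n, hyn]
  · intro i hi
    rcases lt_or_ge i m with h | h
    · rw [hle i h.le, hle (i + 1) h]
      exact hxe i h
    · obtain ⟨j, rfl⟩ := Nat.exists_eq_add_of_le h
      have hj : j < n := by omega
      have e1 : z (m + j) = y j := hge j
      have e2 : z (m + j + 1) = y (j + 1) := by
        rw [show m + j + 1 = m + (j + 1) by omega, hge]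
      rw [e1, e2]
      exact hye j hj
  · unfold cycleWeight
    rw [Finset.sum_range_add]
    congr 1
    · refine Finset.sum_congr rfl fun i hi => ?_
      rw [Finset.mem_range] at hi
      rw [hle i hi.le, hle (i + 1) hi]
    · refine Finset.sum_congr rfl fun i hi => ?_
      rw [hge i, show m + i + 1 = m + (i + 1) by omega, hge]

lemma path_repeat {V : Type*} {ν : ℕ} {E : Set (V × V)} (f : V × V → Fin ν → ℤ)
    {k : ℕ} {x : ℕ → V} {u : V} (hx : IsPathIn E k x u u) (n : ℕ) :
    ∃ z, IsPathIn E (n * k) z u u ∧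
      cycleWeight f (n * k) z = n • cycleWeight f k x := by
  induction n with
  | zero =>
      refine ⟨fun _ => u, ⟨rfl, rfl, fun i hi => absurd hi (by omega)⟩, ?_⟩
      simp [cycleWeight]
  | succ n ih =>
      obtain ⟨z, hz, hw⟩ := ih
      obtain ⟨z', hz', hw'⟩ := path_concat f hz hx
      have hnk : (n + 1) * k = n * k + k := by ring
      refine ⟨z', by rwa [hnk], ?_⟩
      rw [hnk, hw', hw, succ_nsmul]

lemma transgen_path {V : Type*} {E : Set (V × V)} {u v : V}
    (h : Relation.TransGen (fun a b => (a, b) ∈ E) u v) :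
    ∃ n x, 0 < n ∧ IsPathIn E n x u v := by
  induction h with
  | @single b h =>
      refine ⟨1, fun i => if i = 0 then u else b, Nat.one_pos, if_pos rfl,
        if_neg one_ne_zero, fun i hi => ?_⟩
      interval_cases i
      simpa using h
  | @tail b c _ hbc ih =>
      obtain ⟨n, x, hn, hx0, hxn, hxe⟩ := ih
      refine ⟨n + 1, fun i => if i ≤ n then x i else c, by omega,
        by simp [hx0], if_neg (by omega), fun i hi => ?_⟩
      rcases lt_or_ge i n with h | h
      · simp only [if_pos h.le, if_pos (by omega : i + 1 ≤ n)]
        exact hxe i h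
      · have hi' : n = i := by omega
        subst hi'
        simp only [if_pos le_rfl, if_neg (by omega : ¬ n + 1 ≤ n), hxn]
        exact hbc

/-- Let `B` be an irreducible 0–1 matrix of period `p` with edge set
`E` and let `f : E → ℤ^ν`. Then every cycle of `B` has length a multiple of `p`, there
are cycles `γ, γ′` with `l(γ) − l(γ′) = p`, and `Γ_f/Δ_f` is cyclic, generated by the
coset of `c = w_f(γ) − w_f(γ′)` for any two such cycles. -/
theorem statement11 {V : Type*} [Fintype V] (B : Matrix V V ℝ)
    (hB01 : ∀ u v, B u v = 0 ∨ B u v = 1)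
    (hirr : ∀ u v : V, Relation.TransGen (fun a b => (a, b) ∈ Bedges B) u v)
    (p : ℕ) (hp : IsPeriod (Bedges B) Set.univ p)
    (ν : ℕ) (f : V × V → (Fin ν → ℤ)) :
    (∀ k x, IsCycleIn (Bedges B) Set.univ k x → p ∣ k) ∧
    (∃ k₁ x₁ k₂ x₂, IsCycleIn (Bedges B) Set.univ k₁ x₁ ∧
      IsCycleIn (Bedges B) Set.univ k₂ x₂ ∧ k₁ = k₂ + p) ∧
    ∀ k₁ x₁ k₂ x₂, IsCycleIn (Bedges B) Set.univ k₁ x₁ →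
      IsCycleIn (Bedges B) Set.univ k₂ x₂ → k₁ = k₂ + p →
      ∀ y ∈ GammaGroup (Bedges B) Set.univ f, ∃ m : ℤ,
        y - m • (cycleWeight f k₁ x₁ - cycleWeight f k₂ x₂) ∈
          DeltaGroup (Bedges B) Set.univ f := by
  obtain ⟨hp1, hp2, hp3⟩ := hp
  have hV : Nonempty V := by
    by_contra h
    have h0 : (0 : ℕ) ∣ p := hp3 0 (fun k x hx => absurd ⟨x 0⟩ h)
    omega
  obtain ⟨u₀⟩ := hV
  -- turning closed paths into cycles and back
  have cyc_of_path : ∀ {n : ℕ} {x : ℕ → V} {u : V}, 0 < n →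
      IsPathIn (Bedges B) n x u u → IsCycleIn (Bedges B) Set.univ n x :=
    fun hn hx => ⟨hn, fun i _ => Set.mem_univ _, hx.1.trans hx.2.1.symm, hx.2.2⟩
  have path_of_cyc : ∀ {n : ℕ} {x : ℕ → V}, IsCycleIn (Bedges B) Set.univ n x →
      IsPathIn (Bedges B) n x (x 0) (x 0) :=
    fun hx => ⟨rfl, hx.2.2.1.symm, hx.2.2.2⟩
  -- lengths of closed paths at the base point `u₀`
  let Lp : ℤ → Prop := fun z => ∃ n : ℕ, ∃ x : ℕ → V, 0 < n ∧
    IsPathIn (Bedges B) n x u₀ u₀ ∧ z = n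
  have Lp_add : ∀ {a b : ℤ}, Lp a → Lp b → Lp (a + b) := by
    rintro a b ⟨n, x, hn, hx, rfl⟩ ⟨m, y, hm, hy, rfl⟩
    obtain ⟨z, hz, -⟩ := path_concat f hx hy
    exact ⟨n + m, z, by omega, hz, by push_cast; ring⟩
  obtain ⟨n₀, x₀, hn₀, hx₀⟩ := transgen_path (hirr u₀ u₀)
  have hLp0 : Lp n₀ := ⟨n₀, x₀, hn₀, hx₀, rfl⟩
  -- the subgroup of ℤ of differences of lengths of closed paths at `u₀`
  let K : AddSubgroup ℤ :=
    { carrier := {z | ∃ a b, Lp a ∧ Lp b ∧ z = a - b}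
      zero_mem' := ⟨n₀, n₀, hLp0, hLp0, by ring⟩
      add_mem' := by
        rintro z w ⟨a, b, ha, hb, rfl⟩ ⟨a', b', ha', hb', rfl⟩
        exact ⟨a + a', b + b', Lp_add ha ha', Lp_add hb hb', by ring⟩
      neg_mem' := by
        rintro z ⟨a, b, ha, hb, rfl⟩
        exact ⟨b, a, hb, ha, by ring⟩ }
  -- every cycle length belongs to `K`
  have key : ∀ k (x : ℕ → V), IsCycleIn (Bedges B) Set.univ k x → (k : ℤ) ∈ K := by
    intro k x hx
    obtain ⟨r, π, hr, hπ⟩ := transgen_path (hirr u₀ (x 0))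
    obtain ⟨s, π', hs, hπ'⟩ := transgen_path (hirr (x 0) u₀)
    obtain ⟨z1, hz1, -⟩ := path_concat f hπ (path_of_cyc hx)
    obtain ⟨z2, hz2, -⟩ := path_concat f hz1 hπ'
    obtain ⟨z3, hz3, -⟩ := path_concat f hπ hπ'
    refine ⟨((r + k + s : ℕ) : ℤ), ((r + s : ℕ) : ℤ),
      ⟨r + k + s, z2, by omega, hz2, rfl⟩, ⟨r + s, z3, by omega, hz3, rfl⟩, ?_⟩
    push_cast; ring
  obtain ⟨d, hK⟩ := Int.subgroup_cyclic K
  have hdvd : ∀ z : ℤ, z ∈ K → d ∣ z := by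
    intro z hz
    rw [hK, AddSubgroup.mem_closure_singleton] at hz
    obtain ⟨n, hn⟩ := hz
    exact ⟨n, by rw [← hn, smul_eq_mul, mul_comm]⟩
  have hdp : d.natAbs ∣ p := by
    refine hp3 d.natAbs (fun k x hx => ?_)
    have h1 : d ∣ (k : ℤ) := hdvd _ (key k x hx)
    have h2 := Int.natAbs_dvd_natAbs.mpr h1
    simpa using h2
  have hpd : p ∣ d.natAbs := by
    have hdK : d ∈ K := by
      rw [hK]; exact AddSubgroup.mem_closure_singleton_self d
    obtain ⟨a, b, ⟨n, x, hn, hx, rfl⟩, ⟨m, y, hm, hy, rfl⟩, hd⟩ := hdK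
    have h1 : p ∣ n := hp2 n x (cyc_of_path hn hx)
    have h2 : p ∣ m := hp2 m y (cyc_of_path hm hy)
    have h3 : (p : ℤ) ∣ d := by
      rw [hd]
      exact dvd_sub (Int.natCast_dvd_natCast.mpr h1) (Int.natCast_dvd_natCast.mpr h2)
    exact Int.natCast_dvd_natCast.mp (Int.dvd_natAbs.mpr h3)
  have hpK : (p : ℤ) ∈ K := by
    have h1 : d ∣ (p : ℤ) := Int.natAbs_dvd.mp (Int.natCast_dvd_natCast.mpr hdp)
    obtain ⟨c, hc⟩ := h1
    rw [hK, AddSubgroup.mem_closure_singleton]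
    exact ⟨c, by rw [smul_eq_mul, mul_comm, ← hc]⟩
  obtain ⟨a, b, ⟨n₁, y₁, hn₁, hy₁, rfl⟩, ⟨n₂, y₂, hn₂, hy₂, rfl⟩, hab⟩ := hpK
  refine ⟨hp2, ⟨n₁, y₁, n₂, y₂, cyc_of_path hn₁ hy₁, cyc_of_path hn₂ hy₂, by omega⟩, ?_⟩
  -- part 3
  intro k₁ x₁ k₂ x₂ h₁ h₂ hk y hy
  set c : Fin ν → ℤ := cycleWeight f k₁ x₁ - cycleWeight f k₂ x₂ with hcdef
  -- build closed paths A, B at u₀ of lengths differing by p with weight difference c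
  obtain ⟨r₁, π₁, hr₁, hπ₁⟩ := transgen_path (hirr u₀ (x₁ 0))
  obtain ⟨s₁, π₁', hs₁, hπ₁'⟩ := transgen_path (hirr (x₁ 0) u₀)
  obtain ⟨r₂, π₂, hr₂, hπ₂⟩ := transgen_path (hirr u₀ (x₂ 0))
  obtain ⟨s₂, π₂', hs₂, hπ₂'⟩ := transgen_path (hirr (x₂ 0) u₀)
  -- A = π₁ ⬝ x₁ ⬝ π₁' ⬝ π₂ ⬝ π₂'
  obtain ⟨a1, ha1, wa1⟩ := path_concat f hπ₁ (path_of_cyc h₁)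
  obtain ⟨a2, ha2, wa2⟩ := path_concat f ha1 hπ₁'
  obtain ⟨a3, ha3, wa3⟩ := path_concat f ha2 hπ₂
  obtain ⟨zA, hA, wA⟩ := path_concat f ha3 hπ₂'
  -- B = π₁ ⬝ π₁' ⬝ π₂ ⬝ x₂ ⬝ π₂'
  obtain ⟨b1, hb1, wb1⟩ := path_concat f hπ₁ hπ₁'
  obtain ⟨b2, hb2, wb2⟩ := path_concat f hb1 hπ₂
  obtain ⟨b3, hb3, wb3⟩ := path_concat f hb2 (path_of_cyc h₂)
  obtain ⟨zB, hB, wB⟩ := path_concat f hb3 hπ₂'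
  have hAB : r₁ + k₁ + s₁ + r₂ + s₂ = r₁ + s₁ + r₂ + k₂ + s₂ + p := by omega
  have hwAB : cycleWeight f (r₁ + k₁ + s₁ + r₂ + s₂) zA -
      cycleWeight f (r₁ + s₁ + r₂ + k₂ + s₂) zB = c := by
    rw [wA, wa3, wa2, wa1, wB, wb3, wb2, wb1, hcdef]
    abel
  -- the generator property for cycle weights
  have hgen : ∀ (lA lB : ℕ) (zA zB : ℕ → V), lA = lB + p →
      IsPathIn (Bedges B) lA zA u₀ u₀ → IsPathIn (Bedges B) lB zB u₀ u₀ →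
      cycleWeight f lA zA - cycleWeight f lB zB = c →
      ∀ w : Fin ν → ℤ,
      (∃ k x, IsCycleIn (Bedges B) Set.univ k x ∧ w = cycleWeight f k x) →
      ∃ m : ℤ, w - m • c ∈ DeltaGroup (Bedges B) Set.univ f := by
    clear hAB hwAB hA hB wA wB
    rintro lA lB zA zB hAB hA hB hwAB w ⟨k, x, hx, rfl⟩
    obtain ⟨r, π, hr, hπ⟩ := transgen_path (hirr u₀ (x 0))
    obtain ⟨s, π', hs, hπ'⟩ := transgen_path (hirr (x 0) u₀)
    -- γ* = π ⬝ x ⬝ π', τ = π ⬝ π'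
    obtain ⟨g1, hg1, wg1⟩ := path_concat f hπ (path_of_cyc hx)
    obtain ⟨zg, hgp, wg⟩ := path_concat f hg1 hπ'
    obtain ⟨zt, htp, wt⟩ := path_concat f hπ hπ'
    set n : ℕ := k / p with hndef
    have hnk : n * p = k := Nat.div_mul_cancel (hp2 k x hx)
    obtain ⟨zBn, hBn, wBn⟩ := path_repeat f hB n
    obtain ⟨zAn, hAn, wAn⟩ := path_repeat f hA n
    obtain ⟨zX, hX, wX⟩ := path_concat f hgp hBn
    obtain ⟨zY, hY, wY⟩ := path_concat f htp hAn
    have hlen : r + k + s + n * lB = r + s + n * lA := by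
      rw [hAB, Nat.mul_add, hnk]
      omega
    have cycX : IsCycleIn (Bedges B) Set.univ (r + k + s + n * lB) zX :=
      cyc_of_path (by omega) hX
    have cycY : IsCycleIn (Bedges B) Set.univ (r + k + s + n * lB) zY := by
      rw [hlen]
      exact cyc_of_path (by omega) hY
    have hwY : cycleWeight f (r + k + s + n * lB) zY = cycleWeight f (r + s + n * lA) zY := by
      rw [hlen]
    refine ⟨(n : ℤ), ?_⟩
    have hmem : cycleWeight f (r + k + s + n * lB) zX -
        cycleWeight f (r + k + s + n * lB) zY ∈ DeltaGroup (Bedges B) Set.univ f :=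
      AddSubgroup.subset_closure ⟨r + k + s + n * lB, zX, zY, cycX, cycY, rfl⟩
    have heq : cycleWeight f k x - (n : ℤ) • c =
        cycleWeight f (r + k + s + n * lB) zX -
          cycleWeight f (r + k + s + n * lB) zY := by
      rw [hwY, wX, wY, wg, wg1, wt, wBn, wAn, ← hwAB, natCast_zsmul, smul_sub]
      abel
    rwa [heq]
  -- conclude by closure induction
  have hy' : y ∈ AddSubgroup.closure
      {w | ∃ k x, IsCycleIn (Bedges B) Set.univ k x ∧ w = cycleWeight f k x} := hy
  refine AddSubgroup.closure_induction
    (fun w hw => hgen _ _ zA zB hAB hA hB hwAB w hw) ?_ ?_ ?_ hy'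
  · exact ⟨0, by simpa using (DeltaGroup (Bedges B) Set.univ f).zero_mem⟩
  · rintro w₁ w₂ - - ⟨m₁, hm₁⟩ ⟨m₂, hm₂⟩
    refine ⟨m₁ + m₂, ?_⟩
    have := add_mem hm₁ hm₂
    convert this using 1
    rw [add_zsmul]
    abel
  · rintro w - ⟨m, hm⟩
    refine ⟨-m, ?_⟩
    have := neg_mem hm
    convert this using 1
    rw [neg_zsmul]
    abel
end Paper
end
end
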